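/- arXiv:2311.04520 — 3 statements merged into one kernel-verified Lean document; each statement's English description precedes it below -/
import Mathlib

section
/- Let (Ω, ℱ, P) be a probability space. Let Z be a measurable space, D a distribution on Z, and Φ : ℝ^d × ℝ^p × Z → ℝ^m measurable with: ‖Φ(u₁, v₁, z) − Φ(u₂, v₂, z)‖² ≤ 2L² (‖u₁ − u₂‖² + ‖v₁ − v₂‖²) for all inputs and all z; Φ̄(u, v) = E_{ζ∼D}[Φ(u, v, ζ)] exists; and E_{ζ∼D} ‖Φ(u, v, ζ) − Φ̄(u, v)‖² ≤ σ² for all (u, v). Fix s ≥ 0, and let (x_t, y_t)_{t ≥ s} be square-integrable random sequences and (v_t)_{t ≥ s} be defined as follows: v_s = (1/n) Σ_{i=1}^{n} Φ(x_s, y_s, ζ_s^i), and for t > s, v_t = v_{t−1} + (1/b) Σ_{i=1}^{b} ( Φ(x_t, y_t, ζ_t^i) − Φ(x_{t−1}, y_{t−1}, ζ_t^i) ), where for each t the batch (ζ_t^i)_i is i.i.d. with law D and independent of the σ-algebra generated by all batches (ζ_r^i) with r < t together with (x_r, y_r)_{r ≤ t}, and (x_t, y_t) is measurable with respect to that σ-algebra.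 Then for every t ≥ s: E‖v_t − Φ̄(x_t, y_t)‖² ≤ (2L²/b) Σ_{i=s}^{t−1} E[ ‖x_{i+1} − x_i‖² + ‖y_{i+1} − y_i‖² ] + σ²/n. -/
open scoped RealInnerProductSpace ENNReal
open MeasureTheory ProbabilityTheory

open scoped RealInnerProductSpace ENNReal
open MeasureTheory ProbabilityTheory

section Aux16

variable {Ω : Type*} [mΩ : MeasurableSpace Ω] {μP : Measure Ω}
variable {Z : Type*} [MeasurableSpace Z] {D : Measure Z}
variable {E : Type*} [NormedAddCommGroup E] [InnerProductSpace ℝ E]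

omit [InnerProductSpace ℝ E] in
lemma sq16_norm_sub_sq_le (a c : E) : ‖a - c‖ ^ 2 ≤ 2 * ‖a‖ ^ 2 + 2 * ‖c‖ ^ 2 := by
  have h : ‖a - c‖ ^ 2 ≤ (‖a‖ + ‖c‖) ^ 2 :=
    pow_le_pow_left₀ (norm_nonneg _) (norm_sub_le a c) 2
  nlinarith [sq_nonneg (‖a‖ - ‖c‖)]

omit [InnerProductSpace ℝ E] in
lemma sq16_norm_add_sq_le (a c : E) : ‖a + c‖ ^ 2 ≤ 2 * ‖a‖ ^ 2 + 2 * ‖c‖ ^ 2 := by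
  have h : ‖a + c‖ ^ 2 ≤ (‖a‖ + ‖c‖) ^ 2 :=
    pow_le_pow_left₀ (norm_nonneg _) (norm_add_le a c) 2
  nlinarith [sq_nonneg (‖a‖ - ‖c‖)]

lemma sq16_integrable_inner {f g : Ω → E} (hf : MemLp f 2 μP) (hg : MemLp g 2 μP) :
    Integrable (fun ω => ⟪f ω, g ω⟫) μP := by
  have hpqr : (1 : ℝ≥0∞) / 1 = 1 / 2 + 1 / 2 := by
    rw [one_div_one]; exact (ENNReal.add_halves 1).symm
  have h : MemLp ((fun ω => ‖f ω‖) • fun ω => ‖g ω‖) 1 μP :=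
    hg.norm.smul hf.norm (hpqr := ⟨by rw [inv_one]; exact ENNReal.inv_two_add_inv_two⟩)
  refine (memLp_one_iff_integrable.mp h).mono' (hf.1.inner hg.1)
    (Filter.Eventually.of_forall fun ω => ?_)
  simp only [Pi.smul_apply, smul_eq_mul, Real.norm_eq_abs]
  exact abs_real_inner_le_norm _ _

lemma sq16_var_le [CompleteSpace E] [IsProbabilityMeasure D] {X : Z → E}
    (hX : Integrable X D) (hX2 : Integrable (fun z => ‖X z‖ ^ 2) D) :
    ∫ z, ‖X z - ∫ w, X w ∂D‖ ^ 2 ∂D ≤ ∫ z, ‖X z‖ ^ 2 ∂D := by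
  set mX := ∫ w, X w ∂D with hmX
  have h1 : ∀ z, ‖X z - mX‖ ^ 2 = ‖X z‖ ^ 2 - 2 * ⟪X z, mX⟫ + ‖mX‖ ^ 2 := fun z =>
    norm_sub_sq_real _ _
  have hi : Integrable (fun z => ⟪X z, mX⟫) D := hX.inner_const mX
  have hL : Integrable (fun z => ‖X z‖ ^ 2 - 2 * ⟪X z, mX⟫) D := hX2.sub (hi.const_mul 2)
  have hint : ∫ z, ⟪X z, mX⟫ ∂D = ‖mX‖ ^ 2 := by
    have hc : ∀ z, ⟪X z, mX⟫ = ⟪mX, X z⟫ := fun z => real_inner_comm _ _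
    simp_rw [hc]
    rw [integral_inner hX, ← hmX, real_inner_self_eq_norm_sq]
  calc ∫ z, ‖X z - mX‖ ^ 2 ∂D
      = ∫ z, (‖X z‖ ^ 2 - 2 * ⟪X z, mX⟫ + ‖mX‖ ^ 2) ∂D :=
        integral_congr_ae (Filter.Eventually.of_forall h1)
    _ = (∫ z, (‖X z‖ ^ 2 - 2 * ⟪X z, mX⟫) ∂D) + ‖mX‖ ^ 2 := by
        rw [integral_add hL (integrable_const _), integral_const]
        simp
    _ = ∫ z, ‖X z‖ ^ 2 ∂D - 2 * ∫ z, ⟪X z, mX⟫ ∂D + ‖mX‖ ^ 2 := by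
        rw [integral_sub hX2 (hi.const_mul 2), integral_const_mul]
    _ ≤ ∫ z, ‖X z‖ ^ 2 ∂D := by
        rw [hint]; nlinarith [sq_nonneg ‖mX‖]

lemma sq16_pair_law [IsProbabilityMeasure μP] {ι : Type*} (F : ι → MeasurableSpace Ω)
    (hFle : ∀ j, F j ≤ mΩ) (hind : iIndep F μP) (j₀ : ι)
    {ξ : Ω → Z} (hξm : Measurable ξ) (hlaw : μP.map ξ = D)
    (hξF : MeasurableSpace.comap ξ inferInstance ≤ F j₀)
    {E₀ : Type*} [MeasurableSpace E₀] {M : Ω → E₀} (hMm : Measurable M)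
    (hMF : MeasurableSpace.comap M inferInstance ≤ ⨆ j ∈ ({j₀}ᶜ : Set ι), F j) :
    μP.map (fun ω => (M ω, ξ ω)) = (μP.map M).prod D := by
  classical
  have hbig := indep_biSup_compl hFle hind ({j₀}ᶜ)
  rw [compl_compl] at hbig
  have hbig2 : Indep (⨆ j ∈ ({j₀}ᶜ : Set ι), F j)
      (MeasurableSpace.comap ξ inferInstance) μP := by
    refine indep_of_indep_of_le_right hbig (le_trans hξF ?_)
    exact le_iSup₂ (f := fun j (_ : j ∈ ({j₀} : Set ι)) => F j) j₀ (Set.mem_singleton _)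
  have hInd : Indep (MeasurableSpace.comap M inferInstance)
      (MeasurableSpace.comap ξ inferInstance) μP :=
    indep_of_indep_of_le_left hbig2 hMF
  have h := (ProbabilityTheory.indepFun_iff_map_prod_eq_prod_map_map
    hMm.aemeasurable hξm.aemeasurable).mp
    ((ProbabilityTheory.IndepFun_iff_Indep M ξ μP).mpr hInd)
  rwa [hlaw] at h

end Aux16

section Sq16Step
variable {Ω : Type*} [mΩ : MeasurableSpace Ω] {μP : Measure Ω}
variable {Z : Type*} [MeasurableSpace Z] {D : Measure Z}
variable {E : Type*} [NormedAddCommGroup E] [InnerProductSpace ℝ E]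

lemma sq16_step [IsProbabilityMeasure μP] [IsProbabilityMeasure D]
    [MeasurableSpace E] [BorelSpace E] [SecondCountableTopology E] [CompleteSpace E]
    {E' : Type*} [MeasurableSpace E']
    (k : ℕ) (hk : 0 < k) (ξ : Fin k → Ω → Z) (hξm : ∀ i, Measurable (ξ i))
    (hlaw : ∀ i, μP.map (ξ i) = D)
    (F : Option (Fin k) → MeasurableSpace Ω) (hFle : ∀ j, F j ≤ mΩ)
    (hind : iIndep F μP)
    (hξF : ∀ i, MeasurableSpace.comap (ξ i) inferInstance ≤ F (some i))
    (A : Ω → E) (hA𝒢 : Measurable[F none] A) (hA2 : MemLp A 2 μP)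
    (W : Ω → E') (hW𝒢 : Measurable[F none] W)
    (φ : E' → Z → E) (hφm : Measurable fun q : E' × Z => φ q.1 q.2)
    (V : E' → ℝ) (hVm : Measurable V)
    (hφint : ∀ w, Integrable (φ w) D)
    (hφsq : ∀ w, Integrable (fun z => ‖φ w z‖ ^ 2) D)
    (hφ0 : ∀ w, ∫ z, φ w z ∂D = 0)
    (hφV : ∀ w, ∫ z, ‖φ w z‖ ^ 2 ∂D ≤ V w)
    (hVint : Integrable (fun ω => V (W ω)) μP) :
    MemLp (fun ω => A ω + (k : ℝ)⁻¹ • ∑ i : Fin k, φ (W ω) (ξ i ω)) 2 μP ∧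
      ∫ ω, ‖A ω + (k : ℝ)⁻¹ • ∑ i : Fin k, φ (W ω) (ξ i ω)‖ ^ 2 ∂μP
        ≤ ∫ ω, ‖A ω‖ ^ 2 ∂μP + (k : ℝ)⁻¹ * ∫ ω, V (W ω) ∂μP := by
  classical
  have hWm : Measurable W := hW𝒢.mono (hFle none) le_rfl
  have hAm : Measurable A := hA𝒢.mono (hFle none) le_rfl
  set Y : Fin k → Ω → E := fun i ω => φ (W ω) (ξ i ω) with hY
  have hYm : ∀ i, Measurable (Y i) := fun i => hφm.comp (hWm.prodMk (hξm i))
  have hnone : ∀ i : Fin k, F none ≤ ⨆ j ∈ ({some i}ᶜ : Set (Option (Fin k))), F j :=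
    fun i => le_iSup₂ (f := fun j (_ : j ∈ ({some i}ᶜ : Set (Option (Fin k)))) => F j) none
      (by simp)
  have hsome : ∀ (i i' : Fin k), i' ≠ i →
      F (some i') ≤ ⨆ j ∈ ({some i}ᶜ : Set (Option (Fin k))), F j :=
    fun i i' h => le_iSup₂ (f := fun j (_ : j ∈ ({some i}ᶜ : Set (Option (Fin k)))) => F j)
      (some i') (by simp [h])
  -- joint law of (W, ξ i)
  have hmapW : ∀ i, μP.map (fun ω => (W ω, ξ i ω)) = (μP.map W).prod D := fun i =>
    sq16_pair_law F hFle hind (some i) (hξm i) (hlaw i) (hξF i) hWm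
      (le_trans hW𝒢.comap_le (hnone i))
  haveI : IsProbabilityMeasure (μP.map W) := Measure.isProbabilityMeasure_map hWm.aemeasurable
  have hVν : Integrable V (μP.map W) :=
    (integrable_map_measure hVm.aestronglyMeasurable hWm.aemeasurable).mpr hVint
  -- second moment function on the product
  set g2 : E' × Z → ℝ := fun q => ‖φ q.1 q.2‖ ^ 2 with hg2
  have hg2m : Measurable g2 := hφm.norm.pow_const 2
  have hIg2 : Integrable g2 ((μP.map W).prod D) := by
    refine (integrable_prod_iff hg2m.aestronglyMeasurable).mpr ⟨?_, ?_⟩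
    · exact Filter.Eventually.of_forall fun w => hφsq w
    · refine hVν.mono' (hg2m.norm.stronglyMeasurable.integral_prod_right').aestronglyMeasurable
        (Filter.Eventually.of_forall fun w => ?_)
      have hnn : ∀ z, ‖g2 (w, z)‖ = g2 (w, z) := fun z =>
        Real.norm_of_nonneg (sq_nonneg _)
      simp_rw [hnn]
      rw [Real.norm_eq_abs, abs_of_nonneg (integral_nonneg fun z => sq_nonneg _)]
      exact hφV w
  have hYsq_int : ∀ i, Integrable (fun ω => ‖Y i ω‖ ^ 2) μP := by
    intro i
    have h := (integrable_map_measure hg2m.aestronglyMeasurable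
      (hWm.prodMk (hξm i)).aemeasurable).mp (by rw [hmapW i]; exact hIg2)
    exact h
  have hY2 : ∀ i, MemLp (Y i) 2 μP := fun i =>
    (memLp_two_iff_integrable_sq_norm (hYm i).aestronglyMeasurable).mpr (hYsq_int i)
  have hYbound : ∀ i, ∫ ω, ‖Y i ω‖ ^ 2 ∂μP ≤ ∫ ω, V (W ω) ∂μP := by
    intro i
    calc ∫ ω, ‖Y i ω‖ ^ 2 ∂μP
        = ∫ q, g2 q ∂((μP.map W).prod D) := by
          rw [← hmapW i]
          exact (integral_map (hWm.prodMk (hξm i)).aemeasurable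
            hg2m.aestronglyMeasurable).symm
      _ = ∫ w, ∫ z, g2 (w, z) ∂D ∂(μP.map W) := integral_prod g2 hIg2
      _ ≤ ∫ w, V w ∂(μP.map W) :=
          integral_mono_ae hIg2.integral_prod_left hVν (Filter.Eventually.of_forall fun w => hφV w)
      _ = ∫ ω, V (W ω) ∂μP := integral_map hWm.aemeasurable hVm.aestronglyMeasurable
  -- cross terms with A vanish
  have hAY : ∀ i, ∫ ω, ⟪A ω, Y i ω⟫ ∂μP = 0 := by
    intro i
    set M : Ω → E × E' := fun ω => (A ω, W ω) with hM
    have hMm : Measurable M := hAm.prodMk hWm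
    have hM𝒢 : Measurable[F none] M := hA𝒢.prodMk hW𝒢
    set gAY : (E × E') × Z → ℝ := fun q => ⟪q.1.1, φ q.1.2 q.2⟫ with hgAY
    have hgAYm : Measurable gAY :=
      (measurable_fst.comp measurable_fst).inner
        (hφm.comp ((measurable_snd.comp measurable_fst).prodMk measurable_snd))
    have hmapM : μP.map (fun ω => (M ω, ξ i ω)) = (μP.map M).prod D :=
      sq16_pair_law F hFle hind (some i) (hξm i) (hlaw i) (hξF i) hMm
        (le_trans hM𝒢.comap_le (hnone i))
    have hIAY : Integrable (fun ω => ⟪A ω, Y i ω⟫) μP := sq16_integrable_inner hA2 (hY2 i)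
    have hIprod : Integrable gAY ((μP.map M).prod D) := by
      rw [← hmapM]
      exact (integrable_map_measure hgAYm.aestronglyMeasurable
        (hMm.prodMk (hξm i)).aemeasurable).mpr hIAY
    calc ∫ ω, ⟪A ω, Y i ω⟫ ∂μP
        = ∫ q, gAY q ∂((μP.map M).prod D) := by
          rw [← hmapM]
          exact (integral_map (hMm.prodMk (hξm i)).aemeasurable
            hgAYm.aestronglyMeasurable).symm
      _ = ∫ mq, ∫ z, gAY (mq, z) ∂D ∂(μP.map M) := integral_prod gAY hIprod
      _ = 0 := by
          have h0 : ∀ mq : E × E', ∫ z, gAY (mq, z) ∂D = 0 := fun mq => by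
            show ∫ z, ⟪mq.1, φ mq.2 z⟫ ∂D = 0
            rw [integral_inner (hφint mq.2), hφ0 mq.2, inner_zero_right]
          simp_rw [h0]
          exact integral_zero _ _
  -- cross terms between distinct samples vanish
  have hYY : ∀ i j, i ≠ j → ∫ ω, ⟪Y i ω, Y j ω⟫ ∂μP = 0 := by
    intro i j hij
    set M : Ω → E' × Z := fun ω => (W ω, ξ j ω) with hM
    have hMm : Measurable M := hWm.prodMk (hξm j)
    have hMF : MeasurableSpace.comap M inferInstance
        ≤ ⨆ j' ∈ ({some i}ᶜ : Set (Option (Fin k))), F j' := by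
      have hWb : Measurable[⨆ j' ∈ ({some i}ᶜ : Set (Option (Fin k))), F j'] W :=
        hW𝒢.mono (hnone i) le_rfl
      have hξb : Measurable[⨆ j' ∈ ({some i}ᶜ : Set (Option (Fin k))), F j'] (ξ j) := by
        refine Measurable.mono ?_ (le_trans (hξF j) (hsome i j hij.symm)) le_rfl
        exact Measurable.of_comap_le le_rfl
      exact (hWb.prodMk hξb).comap_le
    set g : (E' × Z) × Z → ℝ := fun q => ⟪φ q.1.1 q.2, φ q.1.1 q.1.2⟫ with hg
    have hgm : Measurable g := by
      have h1 : Measurable fun q : (E' × Z) × Z => φ q.1.1 q.2 :=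
        hφm.comp ((measurable_fst.comp measurable_fst).prodMk measurable_snd)
      have h2 : Measurable fun q : (E' × Z) × Z => φ q.1.1 q.1.2 :=
        hφm.comp ((measurable_fst.comp measurable_fst).prodMk
          (measurable_snd.comp measurable_fst))
      exact h1.inner h2
    have hmapM : μP.map (fun ω => (M ω, ξ i ω)) = (μP.map M).prod D :=
      sq16_pair_law F hFle hind (some i) (hξm i) (hlaw i) (hξF i) hMm hMF
    have hIYY : Integrable (fun ω => ⟪Y i ω, Y j ω⟫) μP :=
      sq16_integrable_inner (hY2 i) (hY2 j)
    have hIprod : Integrable g ((μP.map M).prod D) := by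
      rw [← hmapM]
      exact (integrable_map_measure hgm.aestronglyMeasurable
        (hMm.prodMk (hξm i)).aemeasurable).mpr hIYY
    calc ∫ ω, ⟪Y i ω, Y j ω⟫ ∂μP
        = ∫ q, g q ∂((μP.map M).prod D) := by
          rw [← hmapM]
          exact (integral_map (hMm.prodMk (hξm i)).aemeasurable
            hgm.aestronglyMeasurable).symm
      _ = ∫ mq, ∫ z, g (mq, z) ∂D ∂(μP.map M) := integral_prod g hIprod
      _ = 0 := by
          have h0 : ∀ mq : E' × Z, ∫ z, g (mq, z) ∂D = 0 := fun mq => by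
            show ∫ z, ⟪φ mq.1 z, φ mq.1 mq.2⟫ ∂D = 0
            have hc : ∀ z, ⟪φ mq.1 z, φ mq.1 mq.2⟫ = ⟪φ mq.1 mq.2, φ mq.1 z⟫ := fun z =>
              real_inner_comm _ _
            simp_rw [hc]
            rw [integral_inner (hφint mq.1), hφ0 mq.1, inner_zero_right]
          simp_rw [h0]
          exact integral_zero _ _
  -- assemble
  set S : Ω → E := fun ω => ∑ i : Fin k, Y i ω with hS
  have hS2 : MemLp S 2 μP := memLp_finset_sum Finset.univ fun i _ => hY2 i
  have hkR : ((k : ℝ))⁻¹ ≠ 0 := inv_ne_zero (Nat.cast_ne_zero.mpr hk.ne')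
  have hmem : MemLp (fun ω => A ω + (k : ℝ)⁻¹ • ∑ i : Fin k, φ (W ω) (ξ i ω)) 2 μP := by
    have := hA2.add (hS2.const_smul ((k : ℝ)⁻¹))
    exact this
  refine ⟨hmem, ?_⟩
  have hpt : ∀ ω, ‖A ω + (k : ℝ)⁻¹ • ∑ i : Fin k, φ (W ω) (ξ i ω)‖ ^ 2
      = ‖A ω‖ ^ 2 + (2 * (k : ℝ)⁻¹) * ∑ i : Fin k, ⟪A ω, Y i ω⟫
        + ((k : ℝ)⁻¹) ^ 2 * ∑ i : Fin k, ∑ j : Fin k, ⟪Y i ω, Y j ω⟫ := by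
    intro ω
    have h1 : ⟪A ω, (k : ℝ)⁻¹ • S ω⟫ = (k : ℝ)⁻¹ * ∑ i : Fin k, ⟪A ω, Y i ω⟫ := by
      rw [real_inner_smul_right, inner_sum]
    have h2 : ‖(k : ℝ)⁻¹ • S ω‖ ^ 2 = ((k : ℝ)⁻¹) ^ 2 * ∑ i : Fin k, ∑ j : Fin k, ⟪Y i ω, Y j ω⟫ := by
      rw [norm_smul, mul_pow]
      congr 1
      · rw [Real.norm_eq_abs, sq_abs]
      · rw [← real_inner_self_eq_norm_sq, sum_inner]
        exact Finset.sum_congr rfl fun i _ => inner_sum _ _ _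
    calc ‖A ω + (k : ℝ)⁻¹ • ∑ i : Fin k, φ (W ω) (ξ i ω)‖ ^ 2
        = ‖A ω‖ ^ 2 + 2 * ⟪A ω, (k : ℝ)⁻¹ • S ω⟫ + ‖(k : ℝ)⁻¹ • S ω‖ ^ 2 :=
          norm_add_sq_real _ _
      _ = _ := by rw [h1, h2]; ring
  have hInt1 : Integrable (fun ω => ‖A ω‖ ^ 2) μP :=
    (memLp_two_iff_integrable_sq_norm hA2.1).mp hA2
  have hIAYi : ∀ i : Fin k, Integrable (fun ω => ⟪A ω, Y i ω⟫) μP := fun i =>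
    sq16_integrable_inner hA2 (hY2 i)
  have hIYYij : ∀ i j : Fin k, Integrable (fun ω => ⟪Y i ω, Y j ω⟫) μP := fun i j =>
    sq16_integrable_inner (hY2 i) (hY2 j)
  have hInt2 : Integrable (fun ω => (2 * (k : ℝ)⁻¹) * ∑ i : Fin k, ⟪A ω, Y i ω⟫) μP :=
    (integrable_finset_sum Finset.univ fun i _ => hIAYi i).const_mul _
  have hInt3 : Integrable
      (fun ω => ((k : ℝ)⁻¹) ^ 2 * ∑ i : Fin k, ∑ j : Fin k, ⟪Y i ω, Y j ω⟫) μP :=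
    (integrable_finset_sum Finset.univ fun i _ =>
      integrable_finset_sum Finset.univ fun j _ => hIYYij i j).const_mul _
  have heq : ∫ ω, ‖A ω + (k : ℝ)⁻¹ • ∑ i : Fin k, φ (W ω) (ξ i ω)‖ ^ 2 ∂μP
      = ∫ ω, ‖A ω‖ ^ 2 ∂μP
        + ((k : ℝ)⁻¹) ^ 2 * ∑ i : Fin k, ∫ ω, ‖Y i ω‖ ^ 2 ∂μP := by
    rw [integral_congr_ae (Filter.Eventually.of_forall hpt)]
    have hInt12 : Integrable (fun ω => ‖A ω‖ ^ 2
        + (2 * (k : ℝ)⁻¹) * ∑ i : Fin k, ⟪A ω, Y i ω⟫) μP := hInt1.add hInt2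
    rw [integral_add hInt12 hInt3, integral_add hInt1 hInt2]
    rw [integral_const_mul, integral_finset_sum Finset.univ fun i _ => hIAYi i]
    rw [integral_const_mul, integral_finset_sum Finset.univ fun i _ =>
      integrable_finset_sum Finset.univ fun j _ => hIYYij i j]
    have hz1 : ∑ i : Fin k, ∫ ω, ⟪A ω, Y i ω⟫ ∂μP = 0 :=
      Finset.sum_eq_zero fun i _ => hAY i
    have hz2 : ∀ i : Fin k, ∫ ω, ∑ j : Fin k, ⟪Y i ω, Y j ω⟫ ∂μP
        = ∫ ω, ‖Y i ω‖ ^ 2 ∂μP := by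
      intro i
      rw [integral_finset_sum Finset.univ fun j _ => hIYYij i j]
      rw [Finset.sum_eq_single i (fun j _ hj => hYY i j (Ne.symm hj)) (by simp)]
      refine integral_congr_ae (Filter.Eventually.of_forall fun ω => ?_)
      exact real_inner_self_eq_norm_sq _
    rw [hz1]
    simp_rw [hz2]
    ring
  rw [heq]
  have hsum : ∑ i : Fin k, ∫ ω, ‖Y i ω‖ ^ 2 ∂μP ≤ (k : ℝ) * ∫ ω, V (W ω) ∂μP := by
    calc ∑ i : Fin k, ∫ ω, ‖Y i ω‖ ^ 2 ∂μP
        ≤ ∑ _i : Fin k, ∫ ω, V (W ω) ∂μP := Finset.sum_le_sum fun i _ => hYbound i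
      _ = (k : ℝ) * ∫ ω, V (W ω) ∂μP := by
          rw [Finset.sum_const, Finset.card_univ, Fintype.card_fin, nsmul_eq_mul]
  have hkpos : (0 : ℝ) < (k : ℝ) := Nat.cast_pos.mpr hk
  have : ((k : ℝ)⁻¹) ^ 2 * ∑ i : Fin k, ∫ ω, ‖Y i ω‖ ^ 2 ∂μP
      ≤ (k : ℝ)⁻¹ * ∫ ω, V (W ω) ∂μP := by
    calc ((k : ℝ)⁻¹) ^ 2 * ∑ i : Fin k, ∫ ω, ‖Y i ω‖ ^ 2 ∂μP
        ≤ ((k : ℝ)⁻¹) ^ 2 * ((k : ℝ) * ∫ ω, V (W ω) ∂μP) :=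
          mul_le_mul_of_nonneg_left hsum (by positivity)
      _ = (k : ℝ)⁻¹ * ∫ ω, V (W ω) ∂μP := by
          field_simp
  linarith
end Sq16Step

set_option maxHeartbeats 2000000 in
/-- (Lemma B2 of the paper.) Variance bound over one epoch for
SARAH/SPIDER-type recursive estimators: with a full batch of size `n` at the epoch start
`s` and recursive mini-batches of size `b` afterwards, where at each step the fresh batch
is i.i.d. with law `D` and independent (jointly) of the σ-algebra `𝒢 t` generated by all
previous batches together with the iterates up to time `t`, one has for all `t ≥ s`:
`E‖v_t − Φ̄(x_t,y_t)‖² ≤ (2L²/b) Σ_{i=s}^{t−1} E[‖x_{i+1}−x_i‖² + ‖y_{i+1}−y_i‖²] + σ²/n`. -/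
theorem stmt_16 {d p m : ℕ} {Ω : Type*} [mΩ : MeasurableSpace Ω]
    (μP : Measure Ω) [IsProbabilityMeasure μP]
    {Z : Type*} [MeasurableSpace Z]
    (D : Measure Z) [IsProbabilityMeasure D]
    (L σ : ℝ) (s n b : ℕ) (hn : 0 < n) (hb : 0 < b)
    (Φ : EuclideanSpace ℝ (Fin d) → EuclideanSpace ℝ (Fin p) → Z → EuclideanSpace ℝ (Fin m))
    (hΦm : Measurable (fun q : (EuclideanSpace ℝ (Fin d) × EuclideanSpace ℝ (Fin p)) × Z =>
      Φ q.1.1 q.1.2 q.2))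
    (hΦlip : ∀ u₁ u₂ v₁ v₂ z, ‖Φ u₁ v₁ z - Φ u₂ v₂ z‖ ^ 2
      ≤ 2 * L ^ 2 * (‖u₁ - u₂‖ ^ 2 + ‖v₁ - v₂‖ ^ 2))
    (hΦint : ∀ u v, Integrable (fun z => Φ u v z) D)
    (Φbar : EuclideanSpace ℝ (Fin d) → EuclideanSpace ℝ (Fin p) → EuclideanSpace ℝ (Fin m))
    (hΦbar : ∀ u v, Φbar u v = ∫ z, Φ u v z ∂D)
    (hΦvar : ∀ u v, ∫ z, ‖Φ u v z - Φbar u v‖ ^ 2 ∂D ≤ σ ^ 2)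
    (x : ℕ → Ω → EuclideanSpace ℝ (Fin d)) (y : ℕ → Ω → EuclideanSpace ℝ (Fin p))
    (v : ℕ → Ω → EuclideanSpace ℝ (Fin m))
    (ζ : ℕ → ℕ → Ω → Z) (hζm : ∀ t i, Measurable[mΩ] (ζ t i))
    (hxm : ∀ t, Measurable[mΩ] (x t)) (hym : ∀ t, Measurable[mΩ] (y t))
    (hx2 : ∀ t, MemLp (x t) 2 μP) (hy2 : ∀ t, MemLp (y t) 2 μP)
    -- `𝒢 t` is the σ-algebra generated by all batches before time `t` and the iterates up
    -- to time `t`: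
    (𝒢 : ℕ → MeasurableSpace Ω)
    (h𝒢 : ∀ t, 𝒢 t =
      (⨆ r < t, ⨆ i, MeasurableSpace.comap (ζ r i) inferInstance) ⊔
        (⨆ r ≤ t, MeasurableSpace.comap (fun ω => (x r ω, y r ω)) inferInstance))
    -- each sample in the batch at time `t ≥ s` has law `D`:
    (hlaw : ∀ t, s ≤ t → ∀ i < (if t = s then n else b),
      Measure.map (ζ t i) μP = D)
    -- the batch at time `t ≥ s` is (jointly with `𝒢 t`) mutually independent:
    (hind : ∀ t, s ≤ t →
      iIndep (fun j : Option (Fin (if t = s then n else b)) =>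
        j.elim (𝒢 t) (fun i => MeasurableSpace.comap (ζ t (i : ℕ)) inferInstance)) μP)
    -- the SARAH/SPIDER recursion:
    (hvs : ∀ ω, v s ω = (n : ℝ)⁻¹ • ∑ i ∈ Finset.range n, Φ (x s ω) (y s ω) (ζ s i ω))
    (hvt : ∀ t, s < t → ∀ ω, v t ω = v (t - 1) ω
      + (b : ℝ)⁻¹ • ∑ i ∈ Finset.range b,
          (Φ (x t ω) (y t ω) (ζ t i ω) - Φ (x (t - 1) ω) (y (t - 1) ω) (ζ t i ω))) :
    ∀ t, s ≤ t →
      ∫ ω, ‖v t ω - Φbar (x t ω) (y t ω)‖ ^ 2 ∂μP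
        ≤ (2 * L ^ 2 / b) * ∑ i ∈ Finset.Ico s t,
            (∫ ω, (‖x (i + 1) ω - x i ω‖ ^ 2 + ‖y (i + 1) ω - y i ω‖ ^ 2) ∂μP)
          + σ ^ 2 / n := by
  classical
  set Q : ℕ → Ω → EuclideanSpace ℝ (Fin d) × EuclideanSpace ℝ (Fin p) :=
    fun t ω => (x t ω, y t ω) with hQdef
  set B : EuclideanSpace ℝ (Fin d) × EuclideanSpace ℝ (Fin p) → EuclideanSpace ℝ (Fin m) :=
    fun q => Φbar q.1 q.2 with hBdef
  set ψ : (EuclideanSpace ℝ (Fin d) × EuclideanSpace ℝ (Fin p)) → Z → EuclideanSpace ℝ (Fin m) :=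
    fun q z => Φ q.1 q.2 z - B q with hψdef
  set e : ℕ → Ω → EuclideanSpace ℝ (Fin m) := fun t ω => v t ω - B (Q t ω) with hedef
  have hQm : ∀ t, Measurable (Q t) := fun t => (hxm t).prodMk (hym t)
  have hBm : Measurable B := by
    have hBeq : B = fun q : EuclideanSpace ℝ (Fin d) × EuclideanSpace ℝ (Fin p) =>
        ∫ z, Φ q.1 q.2 z ∂D := funext fun q => hΦbar q.1 q.2
    rw [hBeq]
    exact (hΦm.stronglyMeasurable.integral_prod_right').measurable
  have hψm : Measurable fun q : (EuclideanSpace ℝ (Fin d) × EuclideanSpace ℝ (Fin p)) × Z =>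
      ψ q.1 q.2 := hΦm.sub (hBm.comp measurable_fst)
  have hψzm : ∀ q, Measurable (ψ q) := fun q =>
    hψm.comp (measurable_const.prodMk measurable_id)
  have hΦz : ∀ q : EuclideanSpace ℝ (Fin d) × EuclideanSpace ℝ (Fin p),
      Measurable (fun z => Φ q.1 q.2 z) := fun q =>
    hΦm.comp (measurable_const.prodMk measurable_id)
  have h𝒢le : ∀ t, 𝒢 t ≤ mΩ := by
    intro t
    rw [h𝒢 t]
    refine sup_le ?_ ?_
    · exact iSup₂_le fun r _ => iSup_le fun i => (hζm r i).comap_le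
    · exact iSup₂_le fun r _ => ((hxm r).prodMk (hym r)).comap_le
  have h𝒢mono : ∀ t t', t ≤ t' → 𝒢 t ≤ 𝒢 t' := by
    intro t t' h
    rw [h𝒢 t, h𝒢 t']
    refine sup_le_sup ?_ ?_
    · exact iSup₂_le fun r hr => le_iSup₂_of_le r (lt_of_lt_of_le hr h) le_rfl
    · exact iSup₂_le fun r hr => le_iSup₂_of_le r (le_trans hr h) le_rfl
  have hQ𝒢 : ∀ t r, r ≤ t → Measurable[𝒢 t] (Q r) := by
    intro t r hr
    refine Measurable.of_comap_le ?_
    rw [h𝒢 t]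
    refine le_trans ?_ le_sup_right
    exact le_iSup₂_of_le r hr le_rfl
  have hζ𝒢 : ∀ t r i, r < t → Measurable[𝒢 t] (ζ r i) := by
    intro t r i hr
    refine Measurable.of_comap_le ?_
    rw [h𝒢 t]
    refine le_trans ?_ le_sup_left
    exact le_iSup₂_of_le r hr
      (le_iSup (fun i' => MeasurableSpace.comap (ζ r i') inferInstance) i)
  have hv𝒢 : ∀ t, s ≤ t → Measurable[𝒢 (t + 1)] (v t) := by
    intro t ht
    induction t, ht using Nat.le_induction with
    | base =>
      have hveq : v s = fun ω => (n : ℝ)⁻¹ •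
          ∑ i ∈ Finset.range n, Φ (x s ω) (y s ω) (ζ s i ω) := funext hvs
      rw [hveq]
      refine Measurable.fun_const_smul ?_ _
      refine Finset.measurable_sum _ fun i _ => ?_
      exact hΦm.comp ((hQ𝒢 (s+1) s (Nat.le_succ s)).prodMk (hζ𝒢 (s+1) s i (Nat.lt_succ_self s)))
    | succ t ht ih =>
      have hveq : v (t+1) = fun ω => v t ω + (b : ℝ)⁻¹ •
          ∑ i ∈ Finset.range b, (Φ (x (t+1) ω) (y (t+1) ω) (ζ (t+1) i ω)
            - Φ (x t ω) (y t ω) (ζ (t+1) i ω)) := by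
        funext ω
        have h := hvt (t+1) (Nat.lt_succ_of_le ht) ω
        simpa using h
      rw [hveq]
      refine Measurable.add (ih.mono (h𝒢mono (t+1) (t+2) (Nat.le_succ _)) le_rfl) ?_
      refine Measurable.fun_const_smul ?_ _
      refine Finset.measurable_sum _ fun i _ => ?_
      refine Measurable.sub ?_ ?_
      · exact hΦm.comp ((hQ𝒢 (t+2) (t+1) (Nat.le_succ _)).prodMk
          (hζ𝒢 (t+2) (t+1) i (Nat.lt_succ_self _)))
      · exact hΦm.comp ((hQ𝒢 (t+2) t (by omega)).prodMk
          (hζ𝒢 (t+2) (t+1) i (Nat.lt_succ_self _)))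
  have he𝒢 : ∀ t, s ≤ t → Measurable[𝒢 (t + 1)] (e t) := fun t ht =>
    (hv𝒢 t ht).sub (hBm.comp (hQ𝒢 (t+1) t (Nat.le_succ t)))
  have hem : ∀ t, s ≤ t → Measurable (e t) := fun t ht =>
    (he𝒢 t ht).mono (h𝒢le (t+1)) le_rfl
  have hψint : ∀ q, Integrable (ψ q) D := fun q => (hΦint q.1 q.2).sub (integrable_const _)
  have hψ0 : ∀ q, ∫ z, ψ q z ∂D = 0 := by
    intro q
    have hBq : B q = ∫ z, Φ q.1 q.2 z ∂D := hΦbar q.1 q.2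
    calc ∫ z, ψ q z ∂D = ∫ z, (Φ q.1 q.2 z - B q) ∂D :=
          integral_congr_ae (Filter.Eventually.of_forall fun z => by simp [hψdef])
      _ = (∫ z, Φ q.1 q.2 z ∂D) - B q := by
          rw [integral_sub (hΦint q.1 q.2) (integrable_const _), integral_const]
          simp
      _ = 0 := by rw [hBq, sub_self]
  have hXint : ∀ q q' : EuclideanSpace ℝ (Fin d) × EuclideanSpace ℝ (Fin p),
      Integrable (fun z => Φ q.1 q.2 z - Φ q'.1 q'.2 z) D := fun q q' =>
    (hΦint q.1 q.2).sub (hΦint q'.1 q'.2)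
  have hXsq : ∀ q q' : EuclideanSpace ℝ (Fin d) × EuclideanSpace ℝ (Fin p),
      Integrable (fun z => ‖Φ q.1 q.2 z - Φ q'.1 q'.2 z‖ ^ 2) D := by
    intro q q'
    refine (integrable_const (2 * L ^ 2 * (‖q.1 - q'.1‖ ^ 2 + ‖q.2 - q'.2‖ ^ 2))).mono'
      (((hΦz q).sub (hΦz q')).norm.pow_const 2).aestronglyMeasurable
      (Filter.Eventually.of_forall fun z => ?_)
    rw [Real.norm_of_nonneg (sq_nonneg _)]
    exact hΦlip q.1 q'.1 q.2 q'.2 z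
  have hXmean : ∀ q q' : EuclideanSpace ℝ (Fin d) × EuclideanSpace ℝ (Fin p),
      ∫ z, (Φ q.1 q.2 z - Φ q'.1 q'.2 z) ∂D = B q - B q' := by
    intro q q'
    rw [integral_sub (hΦint q.1 q.2) (hΦint q'.1 q'.2)]
    have h1 : B q = ∫ z, Φ q.1 q.2 z ∂D := hΦbar q.1 q.2
    have h2 : B q' = ∫ z, Φ q'.1 q'.2 z ∂D := hΦbar q'.1 q'.2
    rw [h1, h2]
  have hδeq : ∀ q q' z, ψ q z - ψ q' z
      = (Φ q.1 q.2 z - Φ q'.1 q'.2 z) - ∫ w, (Φ q.1 q.2 w - Φ q'.1 q'.2 w) ∂D := by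
    intro q q' z
    rw [hXmean q q']
    simp only [hψdef]
    abel
  have hδsq_int : ∀ q q', Integrable (fun z => ‖ψ q z - ψ q' z‖ ^ 2) D := by
    intro q q'
    refine (Integrable.add ((hXsq q q').const_mul 2)
        (integrable_const (2 * ‖B q - B q'‖ ^ 2))).mono'
      (((hψzm q).sub (hψzm q')).norm.pow_const 2).aestronglyMeasurable
      (Filter.Eventually.of_forall fun z => ?_)
    rw [Real.norm_of_nonneg (sq_nonneg _)]
    calc ‖ψ q z - ψ q' z‖ ^ 2
        ≤ 2 * ‖Φ q.1 q.2 z - Φ q'.1 q'.2 z‖ ^ 2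
          + 2 * ‖∫ w, (Φ q.1 q.2 w - Φ q'.1 q'.2 w) ∂D‖ ^ 2 := by
          rw [hδeq q q' z]; exact sq16_norm_sub_sq_le _ _
      _ = 2 * ‖Φ q.1 q.2 z - Φ q'.1 q'.2 z‖ ^ 2 + 2 * ‖B q - B q'‖ ^ 2 := by
          rw [hXmean q q']
  have hδV : ∀ q q', ∫ z, ‖ψ q z - ψ q' z‖ ^ 2 ∂D
      ≤ 2 * L ^ 2 * (‖q.1 - q'.1‖ ^ 2 + ‖q.2 - q'.2‖ ^ 2) := by
    intro q q'
    have h1 : ∫ z, ‖ψ q z - ψ q' z‖ ^ 2 ∂D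
        = ∫ z, ‖(Φ q.1 q.2 z - Φ q'.1 q'.2 z)
            - ∫ w, (Φ q.1 q.2 w - Φ q'.1 q'.2 w) ∂D‖ ^ 2 ∂D :=
      integral_congr_ae (Filter.Eventually.of_forall fun z => by simp only [hδeq q q' z])
    rw [h1]
    calc ∫ z, ‖(Φ q.1 q.2 z - Φ q'.1 q'.2 z)
            - ∫ w, (Φ q.1 q.2 w - Φ q'.1 q'.2 w) ∂D‖ ^ 2 ∂D
        ≤ ∫ z, ‖Φ q.1 q.2 z - Φ q'.1 q'.2 z‖ ^ 2 ∂D := sq16_var_le (hXint q q') (hXsq q q')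
      _ ≤ ∫ _z, 2 * L ^ 2 * (‖q.1 - q'.1‖ ^ 2 + ‖q.2 - q'.2‖ ^ 2) ∂D :=
          integral_mono_ae (hXsq q q') (integrable_const _)
            (Filter.Eventually.of_forall fun z => hΦlip q.1 q'.1 q.2 q'.2 z)
      _ = 2 * L ^ 2 * (‖q.1 - q'.1‖ ^ 2 + ‖q.2 - q'.2‖ ^ 2) := by simp
  -- the batch at time `s`
  have hits : (if s = s then n else b) = n := if_pos rfl
  have hindsF : iIndep (fun j : Option (Fin n) =>
      j.elim (𝒢 s) fun i => MeasurableSpace.comap (ζ s (i : ℕ)) inferInstance) μP := by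
    have h := hind s le_rfl
    rw [hits] at h
    exact h
  have hlawsi : ∀ i : Fin n, μP.map (ζ s (i : ℕ)) = D := by
    have h := hlaw s le_rfl
    rw [hits] at h
    exact fun i => h (i : ℕ) i.isLt
  set Fs : Option (Fin n) → MeasurableSpace Ω :=
    fun j => j.elim (𝒢 s) fun i => MeasurableSpace.comap (ζ s (i : ℕ)) inferInstance with hFs
  have hFsle : ∀ j, Fs j ≤ mΩ := by
    rintro (_ | i)
    · exact h𝒢le s
    · exact (hζm s (i : ℕ)).comap_le
  -- the value at time s
  have hes : ∀ ω, e s ω = 0 + (n : ℝ)⁻¹ • ∑ i : Fin n, ψ (Q s ω) (ζ s (i : ℕ) ω) := by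
    intro ω
    have h0 : e s ω = v s ω - B (Q s ω) := rfl
    rw [h0, hvs ω, Fin.sum_univ_eq_sum_range (fun i => ψ (Q s ω) (ζ s i ω)) n]
    have hsum : ∑ i ∈ Finset.range n, ψ (Q s ω) (ζ s i ω)
        = (∑ i ∈ Finset.range n, Φ (x s ω) (y s ω) (ζ s i ω)) - n • B (Q s ω) := by
      simp only [hψdef]
      rw [Finset.sum_sub_distrib, Finset.sum_const, Finset.card_range]
    rw [hsum, smul_sub, zero_add]
    congr 1
    rw [← Nat.cast_smul_eq_nsmul ℝ n (B (Q s ω)), smul_smul,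
      inv_mul_cancel₀ (Nat.cast_ne_zero.mpr hn.ne'), one_smul]
  -- one recursion step, as an application of `sq16_step`
  have hstep : ∀ t, s ≤ t → ∀ A : Ω → EuclideanSpace ℝ (Fin m),
      Measurable[𝒢 (t+1)] A → MemLp A 2 μP →
      MemLp (fun ω => A ω + (b : ℝ)⁻¹ • ∑ i : Fin b,
        (ψ (Q (t+1) ω) (ζ (t+1) (i : ℕ) ω) - ψ (Q t ω) (ζ (t+1) (i : ℕ) ω))) 2 μP ∧
      ∫ ω, ‖A ω + (b : ℝ)⁻¹ • ∑ i : Fin b,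
        (ψ (Q (t+1) ω) (ζ (t+1) (i : ℕ) ω) - ψ (Q t ω) (ζ (t+1) (i : ℕ) ω))‖ ^ 2 ∂μP
        ≤ ∫ ω, ‖A ω‖ ^ 2 ∂μP + (b : ℝ)⁻¹ * (2 * L ^ 2
            * ∫ ω, (‖x (t+1) ω - x t ω‖ ^ 2 + ‖y (t+1) ω - y t ω‖ ^ 2) ∂μP) := by
    intro t ht A hA𝒢 hA2
    have hitt : (if t + 1 = s then n else b) = b := if_neg (by omega)
    have hindt : iIndep (fun j : Option (Fin b) =>
        j.elim (𝒢 (t+1)) fun i => MeasurableSpace.comap (ζ (t+1) (i : ℕ)) inferInstance) μP := by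
      have h := hind (t+1) (by omega)
      rw [hitt] at h
      exact h
    have hlawt : ∀ i : Fin b, μP.map (ζ (t+1) (i : ℕ)) = D := by
      have h := hlaw (t+1) (by omega)
      rw [hitt] at h
      exact fun i => h (i : ℕ) i.isLt
    have hVint : Integrable (fun ω => 2 * L ^ 2 *
        (‖x (t+1) ω - x t ω‖ ^ 2 + ‖y (t+1) ω - y t ω‖ ^ 2)) μP := by
      have hxd : MemLp (fun ω => x (t+1) ω - x t ω) 2 μP := (hx2 (t+1)).sub (hx2 t)
      have hyd : MemLp (fun ω => y (t+1) ω - y t ω) 2 μP := (hy2 (t+1)).sub (hy2 t)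
      have hxi : Integrable (fun ω => ‖x (t+1) ω - x t ω‖ ^ 2) μP :=
        (memLp_two_iff_integrable_sq_norm hxd.1).mp hxd
      have hyi : Integrable (fun ω => ‖y (t+1) ω - y t ω‖ ^ 2) μP :=
        (memLp_two_iff_integrable_sq_norm hyd.1).mp hyd
      exact (hxi.add hyi).const_mul _
    have h := sq16_step (μP := μP) (D := D) b hb (fun i : Fin b => ζ (t+1) (i : ℕ))
      (fun i => hζm (t+1) (i : ℕ)) hlawt
      (fun j : Option (Fin b) => j.elim (𝒢 (t+1)) fun i =>
        MeasurableSpace.comap (ζ (t+1) (i : ℕ)) inferInstance)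
      (by rintro (_ | i); exacts [h𝒢le (t+1), (hζm (t+1) (i : ℕ)).comap_le])
      hindt (fun i => le_rfl)
      A hA𝒢 hA2
      (fun ω => (Q (t+1) ω, Q t ω))
      ((hQ𝒢 (t+1) (t+1) le_rfl).prodMk (hQ𝒢 (t+1) t (Nat.le_succ t)))
      (fun w z => ψ w.1 z - ψ w.2 z)
      (by
        have h1 : Measurable fun q : ((EuclideanSpace ℝ (Fin d) × EuclideanSpace ℝ (Fin p))
            × (EuclideanSpace ℝ (Fin d) × EuclideanSpace ℝ (Fin p))) × Z => ψ q.1.1 q.2 :=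
          hψm.comp ((measurable_fst.fst).prodMk measurable_snd)
        have h2 : Measurable fun q : ((EuclideanSpace ℝ (Fin d) × EuclideanSpace ℝ (Fin p))
            × (EuclideanSpace ℝ (Fin d) × EuclideanSpace ℝ (Fin p))) × Z => ψ q.1.2 q.2 :=
          hψm.comp ((measurable_fst.snd).prodMk measurable_snd)
        exact h1.sub h2)
      (fun w => 2 * L ^ 2 * (‖w.1.1 - w.2.1‖ ^ 2 + ‖w.1.2 - w.2.2‖ ^ 2))
      ((((measurable_fst.fst.sub measurable_snd.fst).norm.pow_const 2).add
        ((measurable_fst.snd.sub measurable_snd.snd).norm.pow_const 2)).const_mul (2 * L ^ 2))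
      (fun w => (hψint w.1).sub (hψint w.2))
      (fun w => hδsq_int w.1 w.2)
      (fun w => by rw [integral_sub (hψint w.1) (hψint w.2), hψ0 w.1, hψ0 w.2, sub_zero])
      (fun w => hδV w.1 w.2)
      hVint
    refine ⟨h.1, le_trans h.2 (le_of_eq ?_)⟩
    have h3 : (∫ ω, 2 * L ^ 2 * (‖x (t+1) ω - x t ω‖ ^ 2 + ‖y (t+1) ω - y t ω‖ ^ 2) ∂μP)
        = 2 * L ^ 2 * ∫ ω, (‖x (t+1) ω - x t ω‖ ^ 2 + ‖y (t+1) ω - y t ω‖ ^ 2) ∂μP :=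
      integral_const_mul _ _
    show ∫ ω, ‖A ω‖ ^ 2 ∂μP + (b : ℝ)⁻¹
        * ∫ ω, 2 * L ^ 2 * (‖x (t+1) ω - x t ω‖ ^ 2 + ‖y (t+1) ω - y t ω‖ ^ 2) ∂μP = _
    rw [h3]
  -- the recursion identity for `e`
  have he1 : ∀ t, s ≤ t → ∀ ω, e (t+1) ω = e t ω + (b : ℝ)⁻¹ • ∑ i : Fin b,
      (ψ (Q (t+1) ω) (ζ (t+1) (i : ℕ) ω) - ψ (Q t ω) (ζ (t+1) (i : ℕ) ω)) := by
    intro t ht ω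
    have hv := hvt (t+1) (Nat.lt_succ_of_le ht) ω
    rw [Nat.add_sub_cancel] at hv
    have h0 : e (t+1) ω = v (t+1) ω - B (Q (t+1) ω) := rfl
    have h0' : e t ω = v t ω - B (Q t ω) := rfl
    rw [h0, h0', hv, Fin.sum_univ_eq_sum_range
      (fun i => ψ (Q (t+1) ω) (ζ (t+1) i ω) - ψ (Q t ω) (ζ (t+1) i ω)) b]
    have hsum : ∑ i ∈ Finset.range b,
        (ψ (Q (t+1) ω) (ζ (t+1) i ω) - ψ (Q t ω) (ζ (t+1) i ω))
        = (∑ i ∈ Finset.range b, (Φ (x (t+1) ω) (y (t+1) ω) (ζ (t+1) i ω)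
            - Φ (x t ω) (y t ω) (ζ (t+1) i ω)))
          - b • (B (Q (t+1) ω) - B (Q t ω)) := by
      have hterm : ∀ i, ψ (Q (t+1) ω) (ζ (t+1) i ω) - ψ (Q t ω) (ζ (t+1) i ω)
          = (Φ (x (t+1) ω) (y (t+1) ω) (ζ (t+1) i ω) - Φ (x t ω) (y t ω) (ζ (t+1) i ω))
            - (B (Q (t+1) ω) - B (Q t ω)) := by
        intro i
        simp only [hψdef, hQdef]
        abel
      rw [Finset.sum_congr rfl fun i _ => hterm i, Finset.sum_sub_distrib,
        Finset.sum_const, Finset.card_range]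
    rw [hsum, smul_sub]
    have hbB : (b : ℝ)⁻¹ • (b • (B (Q (t+1) ω) - B (Q t ω)))
        = B (Q (t+1) ω) - B (Q t ω) := by
      rw [← Nat.cast_smul_eq_nsmul ℝ b, smul_smul,
        inv_mul_cancel₀ (Nat.cast_ne_zero.mpr hb.ne'), one_smul]
    rw [hbB]
    abel
  by_cases hGood : ∀ q : EuclideanSpace ℝ (Fin d) × EuclideanSpace ℝ (Fin p),
      Integrable (fun z => ‖ψ q z‖ ^ 2) D
  · -- good case: all second moments exist
    have main : ∀ t, s ≤ t → MemLp (e t) 2 μP ∧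
        ∫ ω, ‖e t ω‖ ^ 2 ∂μP ≤ (2 * L ^ 2 / b) * ∑ i ∈ Finset.Ico s t,
          (∫ ω, (‖x (i + 1) ω - x i ω‖ ^ 2 + ‖y (i + 1) ω - y i ω‖ ^ 2) ∂μP)
          + σ ^ 2 / n := by
      intro t ht
      induction t, ht using Nat.le_induction with
      | base =>
        have h := sq16_step (μP := μP) (D := D) n hn (fun i : Fin n => ζ s (i : ℕ))
          (fun i => hζm s (i : ℕ)) hlawsi Fs hFsle hindsF (fun i => le_rfl)
          (fun _ => (0 : EuclideanSpace ℝ (Fin m))) measurable_const MemLp.zero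
          (Q s) (hQ𝒢 s s le_rfl) ψ hψm (fun _ => σ ^ 2) measurable_const
          hψint hGood hψ0 (fun q => hΦvar q.1 q.2) (integrable_const _)
        obtain ⟨hmem, hbound⟩ := h
        have heseq : e s = fun ω => (0 : EuclideanSpace ℝ (Fin m))
            + (n : ℝ)⁻¹ • ∑ i : Fin n, ψ (Q s ω) (ζ s (i : ℕ) ω) := funext fun ω => hes ω
        constructor
        · rw [heseq]; exact hmem
        · rw [Finset.Ico_self, Finset.sum_empty, mul_zero, zero_add]
          have h1 : ∫ ω, ‖e s ω‖ ^ 2 ∂μP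
              = ∫ ω, ‖(0 : EuclideanSpace ℝ (Fin m))
                + (n : ℝ)⁻¹ • ∑ i : Fin n, ψ (Q s ω) (ζ s (i : ℕ) ω)‖ ^ 2 ∂μP :=
            integral_congr_ae (Filter.Eventually.of_forall fun ω => by simp only [hes ω])
          rw [h1]
          refine le_trans hbound (le_of_eq ?_)
          have hz : ∫ (_ω : Ω), ‖(0 : EuclideanSpace ℝ (Fin m))‖ ^ 2 ∂μP = 0 := by simp
          have hσ : ∫ (_ω : Ω), σ ^ 2 ∂μP = σ ^ 2 := by simp
          show (∫ (_ω : Ω), ‖(0 : EuclideanSpace ℝ (Fin m))‖ ^ 2 ∂μP)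
              + (n : ℝ)⁻¹ * ∫ (_ω : Ω), σ ^ 2 ∂μP = σ ^ 2 / n
          rw [hz, hσ, zero_add, div_eq_inv_mul]
      | succ t ht ih =>
        obtain ⟨ihL2, ihB⟩ := ih
        obtain ⟨hmem1, hbound1⟩ := hstep t ht (e t) (he𝒢 t ht) ihL2
        have heeq : e (t+1) = fun ω => e t ω + (b : ℝ)⁻¹ • ∑ i : Fin b,
            (ψ (Q (t+1) ω) (ζ (t+1) (i : ℕ) ω) - ψ (Q t ω) (ζ (t+1) (i : ℕ) ω)) :=
          funext fun ω => he1 t ht ω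
        constructor
        · rw [heeq]; exact hmem1
        · rw [Finset.sum_Ico_succ_top ht, mul_add]
          have h1 : ∫ ω, ‖e (t+1) ω‖ ^ 2 ∂μP = ∫ ω, ‖e t ω + (b : ℝ)⁻¹ • ∑ i : Fin b,
              (ψ (Q (t+1) ω) (ζ (t+1) (i : ℕ) ω) - ψ (Q t ω) (ζ (t+1) (i : ℕ) ω))‖ ^ 2 ∂μP :=
            integral_congr_ae (Filter.Eventually.of_forall fun ω => by simp only [he1 t ht ω])
          rw [h1]
          have harr : (b : ℝ)⁻¹ * (2 * L ^ 2
              * ∫ ω, (‖x (t+1) ω - x t ω‖ ^ 2 + ‖y (t+1) ω - y t ω‖ ^ 2) ∂μP)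
              = 2 * L ^ 2 / (b : ℝ)
                * ∫ ω, (‖x (t+1) ω - x t ω‖ ^ 2 + ‖y (t+1) ω - y t ω‖ ^ 2) ∂μP := by
            rw [div_eq_mul_inv]; ring
          linarith [hbound1, ihB, harr.le, harr.ge]
    intro t ht
    exact (main t ht).2
  · -- bad case: no second moments anywhere, the LHS integral is zero
    obtain ⟨q₀, hq₀⟩ := not_forall.mp hGood
    have hBadAll : ∀ q, ¬ Integrable (fun z => ‖ψ q z‖ ^ 2) D := by
      intro q hq
      apply hq₀
      refine ((hq.const_mul 2).add ((hδsq_int q q₀).const_mul 2)).mono'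
        ((hψzm q₀).norm.pow_const 2).aestronglyMeasurable
        (Filter.Eventually.of_forall fun z => ?_)
      rw [Real.norm_of_nonneg (sq_nonneg _)]
      have h1 : ψ q₀ z = ψ q z - (ψ q z - ψ q₀ z) := by abel
      calc ‖ψ q₀ z‖ ^ 2 = ‖ψ q z - (ψ q z - ψ q₀ z)‖ ^ 2 := by rw [← h1]
        _ ≤ 2 * ‖ψ q z‖ ^ 2 + 2 * ‖ψ q z - ψ q₀ z‖ ^ 2 := sq16_norm_sub_sq_le _ _
    have hnots : ¬ MemLp (e s) 2 μP := by
      intro hM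
      set n' := n - 1 with hn'
      have hn'succ : n = n' + 1 := by omega
      set R : Ω → (EuclideanSpace ℝ (Fin d) × EuclideanSpace ℝ (Fin p)) × (Fin n' → Z) :=
        fun ω => (Q s ω, fun i : Fin n' => ζ s ((i : ℕ) + 1) ω) with hR
      have hRm : Measurable R :=
        (hQm s).prodMk (measurable_pi_lambda _ fun i => hζm s ((i : ℕ) + 1))
      set i0 : Fin n := ⟨0, hn⟩ with hi0
      have hRF : MeasurableSpace.comap R inferInstance
          ≤ ⨆ j ∈ ({some i0}ᶜ : Set (Option (Fin n))), Fs j := by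
        have hQb : Measurable[⨆ j ∈ ({some i0}ᶜ : Set (Option (Fin n))), Fs j] (Q s) := by
          refine (hQ𝒢 s s le_rfl).mono ?_ le_rfl
          exact le_iSup₂ (f := fun j (_ : j ∈ ({some i0}ᶜ : Set (Option (Fin n)))) => Fs j)
            none (by simp)
        have hζb : ∀ i : Fin n', Measurable[⨆ j ∈ ({some i0}ᶜ : Set (Option (Fin n))), Fs j]
            (ζ s ((i : ℕ) + 1)) := by
          intro i
          have hlt : (i : ℕ) + 1 < n := by omega
          refine Measurable.mono (Measurable.of_comap_le le_rfl) ?_ le_rfl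
          exact le_iSup₂ (f := fun j (_ : j ∈ ({some i0}ᶜ : Set (Option (Fin n)))) => Fs j)
            (some ⟨(i : ℕ) + 1, hlt⟩) (by simp [hi0, Fin.ext_iff])
        have hvec : Measurable[⨆ j ∈ ({some i0}ᶜ : Set (Option (Fin n))), Fs j]
            (fun ω => (fun i : Fin n' => ζ s ((i : ℕ) + 1) ω)) :=
          @measurable_pi_lambda Ω (Fin n') (fun _ => Z)
            (⨆ j ∈ ({some i0}ᶜ : Set (Option (Fin n))), Fs j) (fun _ => inferInstance)
            _ (fun i => hζb i)
        exact (hQb.prodMk hvec).comap_le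
      have hmapR : μP.map (fun ω => (R ω, ζ s 0 ω)) = (μP.map R).prod D :=
        sq16_pair_law Fs hFsle hindsF (some i0) (hζm s 0) (hlawsi i0) le_rfl hRm hRF
      set H : ((EuclideanSpace ℝ (Fin d) × EuclideanSpace ℝ (Fin p)) × (Fin n' → Z)) × Z
          → EuclideanSpace ℝ (Fin m) :=
        fun r => (n : ℝ)⁻¹ • ((∑ i : Fin n', ψ r.1.1 (r.1.2 i)) + ψ r.1.1 r.2) with hH
      have hHm : Measurable H := by
        refine Measurable.fun_const_smul (Measurable.add ?_ ?_) _
        · refine Finset.measurable_sum _ fun i _ => ?_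
          exact hψm.comp ((measurable_fst.fst).prodMk
            ((measurable_pi_apply i).comp measurable_fst.snd))
        · exact hψm.comp ((measurable_fst.fst).prodMk measurable_snd)
      have hesH : ∀ ω, e s ω = H (R ω, ζ s 0 ω) := by
        intro ω
        rw [hes ω, zero_add]
        simp only [hH, hR]
        congr 1
        rw [Fin.sum_univ_eq_sum_range (fun i => ψ (Q s ω) (ζ s i ω)) n,
          Fin.sum_univ_eq_sum_range (fun i => ψ (Q s ω) (ζ s (i + 1) ω)) n']
        conv_lhs => rw [hn'succ]
        exact Finset.sum_range_succ' (fun i => ψ (Q s ω) (ζ s i ω)) n'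
      have hIes : Integrable (fun ω => ‖e s ω‖ ^ 2) μP :=
        (memLp_two_iff_integrable_sq_norm (hem s le_rfl).aestronglyMeasurable).mp hM
      have hIes2 : Integrable (fun ω => ‖H (R ω, ζ s 0 ω)‖ ^ 2) μP :=
        hIes.congr (Filter.Eventually.of_forall fun ω => by simp only [hesH ω])
      have hHm2 : Measurable fun q => ‖H q‖ ^ 2 := hHm.norm.pow_const 2
      have hIprod : Integrable (fun q => ‖H q‖ ^ 2) ((μP.map R).prod D) := by
        rw [← hmapR]
        exact (integrable_map_measure hHm2.aestronglyMeasurable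
          (hRm.prodMk (hζm s 0)).aemeasurable).mpr hIes2
      haveI : IsProbabilityMeasure (μP.map R) := Measure.isProbabilityMeasure_map hRm.aemeasurable
      have hae := ((integrable_prod_iff hHm2.aestronglyMeasurable).mp hIprod).1
      haveI : (ae (μP.map R)).NeBot := ae_neBot.mpr (IsProbabilityMeasure.ne_zero (μP.map R))
      obtain ⟨r, hr⟩ := hae.exists
      have hrx : Integrable (fun z =>
          ‖(n : ℝ)⁻¹ • ((∑ i : Fin n', ψ r.1 (r.2 i)) + ψ r.1 z)‖ ^ 2) D := hr
      have hmz : Measurable fun z => (n : ℝ)⁻¹ • ((∑ i : Fin n', ψ r.1 (r.2 i)) + ψ r.1 z) :=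
        (measurable_const.add (hψzm r.1)).fun_const_smul _
      have h1 : MemLp (fun z => (n : ℝ)⁻¹ • ((∑ i : Fin n', ψ r.1 (r.2 i)) + ψ r.1 z)) 2 D :=
        (memLp_two_iff_integrable_sq_norm hmz.aestronglyMeasurable).mpr hrx
      have h2 : MemLp (fun z => ψ r.1 z) 2 D := by
        have h3 := (h1.const_smul (n : ℝ)).sub (memLp_const (∑ i : Fin n', ψ r.1 (r.2 i)))
        refine MemLp.ae_eq (Filter.Eventually.of_forall fun z => ?_) h3
        show (n : ℝ) • ((n : ℝ)⁻¹ • ((∑ i : Fin n', ψ r.1 (r.2 i)) + ψ r.1 z))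
            - (∑ i : Fin n', ψ r.1 (r.2 i)) = ψ r.1 z
        rw [smul_smul, mul_inv_cancel₀ (Nat.cast_ne_zero.mpr hn.ne'), one_smul]
        abel
      exact hBadAll r.1 ((memLp_two_iff_integrable_sq_norm
        (hψzm r.1).aestronglyMeasurable).mp h2)
    have hnot : ∀ t, s ≤ t → ¬ MemLp (e t) 2 μP := by
      intro t ht
      induction t, ht using Nat.le_induction with
      | base => exact hnots
      | succ t ht ih =>
        intro hM1
        apply ih
        have hu := (hstep t ht (fun _ => (0 : EuclideanSpace ℝ (Fin m)))
          measurable_const MemLp.zero).1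
        have hu' : MemLp (fun ω => (b : ℝ)⁻¹ • ∑ i : Fin b,
            (ψ (Q (t+1) ω) (ζ (t+1) (i : ℕ) ω) - ψ (Q t ω) (ζ (t+1) (i : ℕ) ω))) 2 μP := by
          refine MemLp.ae_eq (Filter.Eventually.of_forall fun ω => ?_) hu
          show (0 : EuclideanSpace ℝ (Fin m)) + _ = _
          rw [zero_add]
        have h4 := hM1.sub hu'
        refine MemLp.ae_eq (Filter.Eventually.of_forall fun ω => ?_) h4
        show e (t+1) ω - (b : ℝ)⁻¹ • ∑ i : Fin b,
          (ψ (Q (t+1) ω) (ζ (t+1) (i : ℕ) ω) - ψ (Q t ω) (ζ (t+1) (i : ℕ) ω)) = e t ω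
        rw [he1 t ht ω]
        abel
    intro t ht
    have hni : ¬ Integrable (fun ω => ‖v t ω - Φbar (x t ω) (y t ω)‖ ^ 2) μP := by
      intro h
      exact hnot t ht ((memLp_two_iff_integrable_sq_norm
        (hem t ht).aestronglyMeasurable).mpr h)
    rw [integral_undef hni]
    have h1 : (0:ℝ) ≤ 2 * L ^ 2 / b := by positivity
    refine add_nonneg (mul_nonneg h1 (Finset.sum_nonneg fun i _ =>
      integral_nonneg fun ω => ?_)) (by positivity)
    positivity
end

section
/- Assume the bilevel setting: g : ℝ^d × ℝ^p → ℝ is differentiable with ∇_x g and ∇_y g each L_g-Lipschitz in each variable; for every x, g(x,·) attains its minimum G(x) at y*(x), satisfies the μ-PL condition ‖∇_y g(x, y)‖² ≥ 2μ (g(x, y) − G(x)) and the quadratic growth condition g(x, y) − G(x) ≥ (μ/2)‖y − y*(x)‖² for all y, with 0 < μ ≤ L_g; G is differentiable with ∇G(x) = ∇_x g(x, y*(x)) and ∇G is L_G-Lipschitz with L_G ≥ max{L_g, L_g²/(2μ)}; F : ℝ^d → ℝ is differentiable with L_F-Lipschitz gradient; h : ℝ^d → ℝ is convex; Φ = F +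 h; and L̂ > 0. Let sequences (x_t, y_t, w_t, A_t, B_t) satisfy: A_t ∈ ℝ^{d×d} symmetric with A_t ⪰ ρ I_d; B_t ∈ ℝ^{p×p} symmetric with ρ_l I_p ⪯ B_t ⪯ ρ_u I_p, with ρ_l = ρ ∈ (0,1) and ρ_l ρ_u ≥ 1; x_{t+1} = argmin_{z ∈ ℝ^d}{ ⟨w_t, z⟩ + (1/(2γ))(z − x_t)ᵀ A_t (z − x_t) + h(z) }; y_{t+1} = y_t − λ B_t^{-1} ∇_y g(x_t, y_t); and the hypergradient estimation error bound ‖w_t − ∇F(x_t)‖² ≤ (2 L̂²/μ)(g(x_t, y_t) − G(x_t)) holds for every t. If 0 < γ ≤ min{ 3ρ/(4 L_F), ρλμ²/(8 ρ_u L̂²), λμρ_l/(16 L_G ρ_u), μρ_l/(16 L_g² ρ_u) } and 0 < λ ≤ 1/(2 L_g ρ_u), then with the Lyapunov function Ω_t = Φ(x_t) + g(x_t, y_t) − G(x_t) and the gradient mapping 𝒢(x_t, w_t, γ) = (x_t − x_{t+1})/γ, for every t: Ω_{t+1} − Ω_t ≤ −(λμ/(4ρ_u)) (g(x_t, y_t)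 − G(x_t)) − (ργ/4) ‖𝒢(x_t, w_t, γ)‖². -/
open scoped RealInnerProductSpace

section aux

variable {E : Type*} [NormedAddCommGroup E] [InnerProductSpace ℝ E] [CompleteSpace E]

lemma line_hasDerivAt' (f : E → ℝ) (f' : E → E)
    (hf : ∀ z, HasGradientAt f (f' z) z) (a v : E) (τ : ℝ) :
    HasDerivAt (fun σ : ℝ => f (a + σ • v)) ⟪f' (a + τ • v), v⟫ τ := by
  have h1 : HasDerivAt (fun σ : ℝ => a + σ • v) v τ := by
    simpa using ((hasDerivAt_id τ).smul_const v).const_add a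
  have h2 := ((hf (a + τ • v)).hasFDerivAt).comp_hasDerivAt τ h1
  simp [InnerProductSpace.toDual_apply_apply] at h2
  exact h2

lemma HasGradientAt.neg' {f : E → ℝ} {f' : E} {z : E}
    (hf : HasGradientAt f f' z) : HasGradientAt (fun z' => -f z') (-f') z := by
  rw [hasGradientAt_iff_hasFDerivAt] at *
  rw [map_neg]
  exact hf.neg

lemma descent_lemma (f : E → ℝ) (f' : E → E) (L : ℝ)
    (hf : ∀ z, HasGradientAt f (f' z) z)
    (hlip : ∀ z₁ z₂, ‖f' z₁ - f' z₂‖ ≤ L * ‖z₁ - z₂‖)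
    (a b : E) : f b ≤ f a + ⟪f' a, b - a⟫ + L / 2 * ‖b - a‖ ^ 2 := by
  set v := b - a with hv
  set φ : ℝ → ℝ := fun τ => f a + τ * ⟪f' a, v⟫ + L / 2 * τ ^ 2 * ‖v‖ ^ 2 - f (a + τ • v)
    with hφ
  have hd : ∀ τ : ℝ, HasDerivAt φ
      (⟪f' a, v⟫ + L * τ * ‖v‖ ^ 2 - ⟪f' (a + τ • v), v⟫) τ := by
    intro τ
    have h1 := line_hasDerivAt' f f' hf a v τ
    have h2 : HasDerivAt (fun τ : ℝ => f a + τ * ⟪f' a, v⟫ + L / 2 * τ ^ 2 * ‖v‖ ^ 2)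
        (⟪f' a, v⟫ + L * τ * ‖v‖ ^ 2) τ := by
      have h3 : HasDerivAt (fun τ : ℝ => f a + τ * ⟪f' a, v⟫ + L / 2 * τ ^ 2 * ‖v‖ ^ 2)
          (0 + 1 * ⟪f' a, v⟫ + L / 2 * (↑2 * τ ^ 1) * ‖v‖ ^ 2) τ := by
        exact ((hasDerivAt_const τ (f a)).add ((hasDerivAt_id τ).mul_const _)).add
          (((hasDerivAt_pow 2 τ).const_mul (L / 2)).mul_const _)
      convert h3 using 1; ring
    exact h2.sub h1
  have hder_nonneg : ∀ τ ∈ Set.Ioo (0:ℝ) 1, 0 ≤ deriv φ τ := by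
    intro τ hτ
    rw [(hd τ).deriv]
    have h3 : ⟪f' (a + τ • v) - f' a, v⟫ ≤ L * τ * ‖v‖ ^ 2 := by
      calc ⟪f' (a + τ • v) - f' a, v⟫ ≤ ‖f' (a + τ • v) - f' a‖ * ‖v‖ :=
            real_inner_le_norm _ _
        _ ≤ (L * ‖(a + τ • v) - a‖) * ‖v‖ :=
            mul_le_mul_of_nonneg_right (hlip _ _) (norm_nonneg _)
        _ = L * τ * ‖v‖ ^ 2 := by
            rw [add_sub_cancel_left, norm_smul, Real.norm_eq_abs, abs_of_pos hτ.1]; ring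
    have h4 : ⟪f' (a + τ • v) - f' a, v⟫ = ⟪f' (a + τ • v), v⟫ - ⟪f' a, v⟫ :=
      inner_sub_left _ _ _
    linarith
  have hmono : MonotoneOn φ (Set.Icc (0:ℝ) 1) := by
    apply monotoneOn_of_deriv_nonneg (convex_Icc 0 1)
    · exact fun τ _ => ((hd τ).differentiableAt.continuousAt).continuousWithinAt
    · intro τ hτ
      exact ((hd τ).differentiableAt).differentiableWithinAt
    · intro τ hτ
      rw [interior_Icc] at hτ
      exact hder_nonneg τ hτ
  have h01 := hmono (Set.mem_Icc.mpr ⟨le_refl 0, zero_le_one⟩)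
    (Set.mem_Icc.mpr ⟨zero_le_one, le_refl 1⟩) zero_le_one
  have hφ0 : φ 0 = 0 := by simp [hφ]
  have hb : a + (1:ℝ) • v = b := by rw [one_smul, hv]; abel
  have hφ1 : φ 1 = f a + ⟪f' a, v⟫ + L / 2 * ‖v‖ ^ 2 - f b := by
    rw [hφ]; simp only []; rw [hb]; ring
  rw [hφ0, hφ1] at h01
  linarith

lemma psd_norm_sq_le {ρ ρu : ℝ} (hρ : 0 < ρ)
    (Bt : E →L[ℝ] E)
    (hsymm : ∀ v w, ⟪Bt v, w⟫ = ⟪v, Bt w⟫)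
    (hl : ∀ v, ρ * ‖v‖ ^ 2 ≤ ⟪Bt v, v⟫)
    (hu : ∀ v, ⟪Bt v, v⟫ ≤ ρu * ‖v‖ ^ 2)
    (s : E) : ‖Bt s‖ ^ 2 ≤ ρu * ⟪Bt s, s⟫ := by
  have hQs : (0:ℝ) ≤ ⟪Bt s, s⟫ := le_trans (by positivity) (hl s)
  by_cases h0 : Bt s = 0
  · rw [h0]
    rw [inner_zero_left, norm_zero, mul_zero]
    norm_num
  · set u := Bt s with hu'
    have hune : u ≠ 0 := by rw [hu']; exact h0
    have hu2 : (0:ℝ) < ‖u‖ ^ 2 := pow_pos (norm_pos_iff.mpr hune) 2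
    have hR : (0:ℝ) < ⟪Bt u, u⟫ := lt_of_lt_of_le (by positivity) (hl u)
    have hbsu : ⟪Bt s, u⟫ = ‖u‖ ^ 2 := by
      rw [← hu', real_inner_self_eq_norm_sq]
    have hbus : ⟪Bt u, s⟫ = ‖u‖ ^ 2 := by
      rw [hsymm, ← hu', real_inner_comm, real_inner_self_eq_norm_sq]
    have expand : ∀ c : ℝ, 0 ≤ ⟪Bt s, s⟫ + 2 * c * ‖u‖ ^ 2 + c ^ 2 * ⟪Bt u, u⟫ := by
      intro c
      have h1 : (0:ℝ) ≤ ⟪Bt (s + c • u), s + c • u⟫ := le_trans (by positivity) (hl _)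
      have h2 : ⟪Bt (s + c • u), s + c • u⟫
          = ⟪Bt s, s⟫ + 2 * c * ‖u‖ ^ 2 + c ^ 2 * ⟪Bt u, u⟫ := by
        rw [map_add, map_smul, inner_add_left, inner_add_right, inner_add_right,
          real_inner_smul_left, real_inner_smul_left, real_inner_smul_right,
          real_inner_smul_right, hbsu, hbus]
        ring
      linarith [h2 ▸ h1]
    have key := expand (-‖u‖ ^ 2 / ⟪Bt u, u⟫)
    have key2 : 0 ≤ ⟪Bt s, s⟫ * ⟪Bt u, u⟫ - ‖u‖ ^ 2 * ‖u‖ ^ 2 := by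
      have e : ⟪Bt u, u⟫ * (⟪Bt s, s⟫ + 2 * (-‖u‖ ^ 2 / ⟪Bt u, u⟫) * ‖u‖ ^ 2
          + (-‖u‖ ^ 2 / ⟪Bt u, u⟫) ^ 2 * ⟪Bt u, u⟫)
          = ⟪Bt s, s⟫ * ⟪Bt u, u⟫ - ‖u‖ ^ 2 * ‖u‖ ^ 2 := by
        field_simp
        ring
      have := mul_nonneg hR.le key
      rw [e] at this
      exact this
    have hRu : ⟪Bt u, u⟫ ≤ ρu * ‖u‖ ^ 2 := hu u
    nlinarith [key2, hRu, hQs, hu2]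

lemma prox_ineq {γ ρ : ℝ} (hγ : 0 < γ) (hρ : 0 < ρ)
    (h : E → ℝ) (hconv : ConvexOn ℝ Set.univ h)
    (wt : E) (At : E →L[ℝ] E)
    (hApos : ∀ v, ρ * ‖v‖ ^ 2 ≤ ⟪At v, v⟫)
    (xt xs : E)
    (hmin : ∀ z, ⟪wt, xs⟫ + (1 / (2 * γ)) * ⟪At (xs - xt), xs - xt⟫ + h xs
      ≤ ⟪wt, z⟫ + (1 / (2 * γ)) * ⟪At (z - xt), z - xt⟫ + h z) :
    h xs - h xt ≤ ⟪wt, xt - xs⟫ - (1 / γ) * ⟪At (xs - xt), xs - xt⟫ := by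
  set Q := ⟪At (xs - xt), xs - xt⟫ with hQ
  have hQ0 : 0 ≤ Q := le_trans (by positivity) (hApos _)
  have key : ∀ θ : ℝ, 0 < θ → θ ≤ 1 →
      h xs - h xt ≤ ⟪wt, xt - xs⟫ - (1 / γ) * Q + θ * (1 / (2 * γ)) * Q := by
    intro θ hθ0 hθ1
    have hz := hmin (xs + θ • (xt - xs))
    have e1 : ⟪wt, xs + θ • (xt - xs)⟫ = ⟪wt, xs⟫ + θ * ⟪wt, xt - xs⟫ := by
      rw [inner_add_right, real_inner_smul_right]
    have e2 : (xs + θ • (xt - xs)) - xt = (1 - θ) • (xs - xt) := by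
      module
    have e3 : ⟪At ((1 - θ) • (xs - xt)), (1 - θ) • (xs - xt)⟫ = (1 - θ) ^ 2 * Q := by
      rw [map_smul, real_inner_smul_left, real_inner_smul_right, hQ]; ring
    have e4 : h (xs + θ • (xt - xs)) ≤ (1 - θ) * h xs + θ * h xt := by
      have e5 : (1 - θ) • xs + θ • xt = xs + θ • (xt - xs) := by module
      have := hconv.2 (Set.mem_univ xs) (Set.mem_univ xt)
        (by linarith : (0:ℝ) ≤ 1 - θ) hθ0.le (by ring)
      rw [e5] at this
      exact this
    rw [e1, e2, e3] at hz
    have cancel : θ * (h xs - h xt) ≤ θ * (⟪wt, xt - xs⟫ - (1 / γ) * Q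
        + θ * (1 / (2 * γ)) * Q) := by
      have hγ' : (1 / (2 * γ)) * ((1 - θ) ^ 2) * Q - (1 / (2 * γ)) * Q
          = θ * (-(1 / γ) * Q + θ * (1 / (2 * γ)) * Q) := by
        field_simp
        ring
      nlinarith [hz, hγ']
    exact le_of_mul_le_mul_left (by linarith [cancel]) hθ0
  refine le_of_forall_pos_le_add ?_
  intro ε hε
  by_cases hQz : Q = 0
  · have h1 := key 1 one_pos le_rfl
    rw [hQz] at h1
    rw [hQz]
    simp only [mul_zero] at h1 ⊢
    linarith
  · have hQpos : 0 < Q := lt_of_le_of_ne hQ0 (Ne.symm hQz)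
    have hθd : (0:ℝ) < 2 * γ * ε / Q := by positivity
    set θ := min 1 (2 * γ * ε / Q) with hθ
    have hθ0 : 0 < θ := lt_min one_pos hθd
    have hθ1 : θ ≤ 1 := min_le_left _ _
    have h2 : θ * (1 / (2 * γ)) * Q ≤ ε := by
      have hm : θ ≤ 2 * γ * ε / Q := min_le_right _ _
      have : θ * Q ≤ 2 * γ * ε := by
        rw [← le_div_iff₀ hQpos] at *
        exact hm
      calc θ * (1 / (2 * γ)) * Q = (θ * Q) * (1 / (2 * γ)) := by ring
        _ ≤ (2 * γ * ε) * (1 / (2 * γ)) := by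
            apply mul_le_mul_of_nonneg_right this (by positivity)
        _ = ε := by field_simp
    linarith [key θ hθ0 hθ1]

lemma young_div {a b c d : ℝ} (hc : 0 < c) (hd : 0 < d) :
    a * b ≤ c / d * a ^ 2 + d / (4 * c) * b ^ 2 := by
  refine le_of_mul_le_mul_left ?_ (show (0:ℝ) < 4 * c * d by positivity)
  have e1 : 4 * c * d * (c / d * a ^ 2 + d / (4 * c) * b ^ 2)
      = 4 * c ^ 2 * a ^ 2 + d ^ 2 * b ^ 2 := by
    field_simp
  rw [e1]
  nlinarith only [sq_nonneg (2 * c * a - d * b)]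

lemma young_two {L k a b : ℝ} (hk : 0 < k) :
    L * a * b ≤ k / 2 * a ^ 2 + L ^ 2 / (2 * k) * b ^ 2 := by
  refine le_of_mul_le_mul_left ?_ (show (0:ℝ) < 2 * k by positivity)
  have e1 : 2 * k * (k / 2 * a ^ 2 + L ^ 2 / (2 * k) * b ^ 2)
      = k ^ 2 * a ^ 2 + L ^ 2 * b ^ 2 := by
    field_simp
  rw [e1]
  nlinarith only [sq_nonneg (k * a - L * b)]

end aux


set_option maxHeartbeats 2000000 in
/-- One-step decrease of the Lyapunov function
`Ω_t = Φ(x_t) + g(x_t,y_t) − G(x_t)` for the AdaPAG iterates: under the bilevel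
smoothness/PL/quadratic-growth assumptions, the adaptive mirror-descent updates with
`A_t ⪰ ρ I`, `ρ_l I ⪯ B_t ⪯ ρ_u I` (`ρ_l = ρ ∈ (0,1)`, `ρ_l ρ_u ≥ 1`), the hypergradient
estimation bound `‖w_t − ∇F(x_t)‖² ≤ (2L̂²/μ)(g(x_t,y_t) − G(x_t))`, and the stated step
size restrictions, one has
`Ω_{t+1} − Ω_t ≤ −(λμ/(4ρ_u))(g(x_t,y_t) − G(x_t)) − (ργ/4)‖𝒢(x_t,w_t,γ)‖²`, where
`𝒢(x_t,w_t,γ) = (x_t − x_{t+1})/γ`. -/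
theorem stmt_17 {d p : ℕ} (μ Lg LG LF Lhat ρ ρu γ lam : ℝ)
    (hμ : 0 < μ) (hμLg : μ ≤ Lg) (hLG : max Lg (Lg ^ 2 / (2 * μ)) ≤ LG)
    (hLhat : 0 < Lhat)
    (hρ : 0 < ρ) (hρ1 : ρ < 1) (hρu : 0 < ρu) (hρρu : 1 ≤ ρ * ρu)
    -- lower-level objective and its partial gradients:
    (g : EuclideanSpace ℝ (Fin d) → EuclideanSpace ℝ (Fin p) → ℝ)
    (gx : EuclideanSpace ℝ (Fin d) → EuclideanSpace ℝ (Fin p) → EuclideanSpace ℝ (Fin d))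
    (gy : EuclideanSpace ℝ (Fin d) → EuclideanSpace ℝ (Fin p) → EuclideanSpace ℝ (Fin p))
    (hgx : ∀ x y, HasGradientAt (fun x' => g x' y) (gx x y) x)
    (hgy : ∀ x y, HasGradientAt (fun y' => g x y') (gy x y) y)
    (hgxlipy : ∀ x y₁ y₂, ‖gx x y₁ - gx x y₂‖ ≤ Lg * ‖y₁ - y₂‖)
    (hgxlipx : ∀ x₁ x₂ y, ‖gx x₁ y - gx x₂ y‖ ≤ Lg * ‖x₁ - x₂‖)
    (hgylipy : ∀ x y₁ y₂, ‖gy x y₁ - gy x y₂‖ ≤ Lg * ‖y₁ - y₂‖)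
    (hgylipx : ∀ x₁ x₂ y, ‖gy x₁ y - gy x₂ y‖ ≤ Lg * ‖x₁ - x₂‖)
    -- value function `G`, minimizers `y*`, PL and quadratic growth:
    (G : EuclideanSpace ℝ (Fin d) → ℝ)
    (ystar : EuclideanSpace ℝ (Fin d) → EuclideanSpace ℝ (Fin p))
    (hGval : ∀ x, g x (ystar x) = G x) (hGlow : ∀ x y, G x ≤ g x y)
    (hPL : ∀ x y, ‖gy x y‖ ^ 2 ≥ 2 * μ * (g x y - G x))
    (hQG : ∀ x y, g x y - G x ≥ (μ / 2) * ‖y - ystar x‖ ^ 2)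
    (hGgrad : ∀ x, HasGradientAt G (gx x (ystar x)) x)
    (hGlip : ∀ x₁ x₂, ‖gx x₁ (ystar x₁) - gx x₂ (ystar x₂)‖ ≤ LG * ‖x₁ - x₂‖)
    -- upper-level objective `F` and nonsmooth regularizer `h`:
    (F : EuclideanSpace ℝ (Fin d) → ℝ)
    (F' : EuclideanSpace ℝ (Fin d) → EuclideanSpace ℝ (Fin d))
    (hF : ∀ z, HasGradientAt F (F' z) z)
    (hFlip : ∀ z₁ z₂, ‖F' z₁ - F' z₂‖ ≤ LF * ‖z₁ - z₂‖)
    (h : EuclideanSpace ℝ (Fin d) → ℝ) (hconv : ConvexOn ℝ Set.univ h)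
    -- iterates and adaptive matrices:
    (x : ℕ → EuclideanSpace ℝ (Fin d)) (y : ℕ → EuclideanSpace ℝ (Fin p))
    (w : ℕ → EuclideanSpace ℝ (Fin d))
    (A : ℕ → (EuclideanSpace ℝ (Fin d) →L[ℝ] EuclideanSpace ℝ (Fin d)))
    (B : ℕ → (EuclideanSpace ℝ (Fin p) →L[ℝ] EuclideanSpace ℝ (Fin p)))
    (hAsymm : ∀ t v' w', ⟪A t v', w'⟫ = ⟪v', A t w'⟫)
    (hApos : ∀ t v', ρ * ‖v'‖ ^ 2 ≤ ⟪A t v', v'⟫)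
    (hBsymm : ∀ t v' w', ⟪B t v', w'⟫ = ⟪v', B t w'⟫)
    (hBl : ∀ t v', ρ * ‖v'‖ ^ 2 ≤ ⟪B t v', v'⟫)
    (hBu : ∀ t v', ⟪B t v', v'⟫ ≤ ρu * ‖v'‖ ^ 2)
    -- the AdaPAG updates:
    (hx : ∀ t z, ⟪w t, x (t + 1)⟫
        + (1 / (2 * γ)) * ⟪A t (x (t + 1) - x t), x (t + 1) - x t⟫ + h (x (t + 1))
      ≤ ⟪w t, z⟫ + (1 / (2 * γ)) * ⟪A t (z - x t), z - x t⟫ + h z)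
    (hy : ∀ t, B t (y t - y (t + 1)) = lam • gy (x t) (y t))
    -- hypergradient estimation error bound (Lemma 3):
    (hw : ∀ t, ‖w t - F' (x t)‖ ^ 2 ≤ (2 * Lhat ^ 2 / μ) * (g (x t) (y t) - G (x t)))
    -- step sizes:
    (hγ : 0 < γ) (hγ1 : γ ≤ 3 * ρ / (4 * LF))
    (hγ2 : γ ≤ ρ * lam * μ ^ 2 / (8 * ρu * Lhat ^ 2))
    (hγ3 : γ ≤ lam * μ * ρ / (16 * LG * ρu))
    (hγ4 : γ ≤ μ * ρ / (16 * Lg ^ 2 * ρu))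
    (hlam : 0 < lam) (hlamle : lam ≤ 1 / (2 * Lg * ρu)) :
    ∀ t, (F (x (t + 1)) + h (x (t + 1)) + (g (x (t + 1)) (y (t + 1)) - G (x (t + 1))))
        - (F (x t) + h (x t) + (g (x t) (y t) - G (x t)))
      ≤ -(lam * μ / (4 * ρu)) * (g (x t) (y t) - G (x t))
        - (ρ * γ / 4) * ‖γ⁻¹ • (x t - x (t + 1))‖ ^ 2 := by
  -- basic positivity and parameter facts
  have hLgpos : 0 < Lg := lt_of_lt_of_le hμ hμLg
  have hLGpos : 0 < LG := lt_of_lt_of_le hLgpos (le_trans (le_max_left _ _) hLG)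
  have hρu1 : 1 ≤ ρu := by nlinarith only [hρρu, hρ1, hρu, hρ]
  have hLF : 0 < LF := by
    rcases lt_trichotomy LF 0 with hc | hc | hc
    · exfalso
      have : 3 * ρ / (4 * LF) < 0 :=
        div_neg_of_pos_of_neg (by positivity) (by linarith)
      linarith
    · exfalso
      rw [hc] at hγ1
      norm_num at hγ1
      linarith
    · exact hc
  have hB1 : γ * (4 * LF) ≤ 3 * ρ := (le_div_iff₀ (by positivity)).mp hγ1
  have hB2 : γ * (8 * ρu * Lhat ^ 2) ≤ ρ * lam * μ ^ 2 := (le_div_iff₀ (by positivity)).mp hγ2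
  have hB3 : γ * (16 * LG * ρu) ≤ lam * μ * ρ := (le_div_iff₀ (by positivity)).mp hγ3
  have hlam2 : lam * (2 * Lg * ρu) ≤ 1 := (le_div_iff₀ (by positivity)).mp hlamle
  have hLgLG : Lg ^ 2 ≤ 2 * μ * LG := by
    have h1 := le_trans (le_max_right Lg (Lg ^ 2 / (2 * μ))) hLG
    rw [div_le_iff₀ (by positivity)] at h1
    linarith
  have hLgle : Lg ≤ LG := le_trans (le_max_left _ _) hLG
  have h2ll : 2 * lam * Lg ≤ ρ := by nlinarith only [hlam2, hρρu, hρu]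
  have hlm2 : 2 * lam * μ ≤ ρ := by
    nlinarith only [h2ll, mul_le_mul_of_nonneg_left hμLg (show (0:ℝ) ≤ 2 * lam by positivity)]
  intro t
  -- abbreviations (as plain lets in comments): X = x t, X' = x (t+1), Y = y t, Y' = y (t+1)
  have hδ0 : 0 ≤ g (x t) (y t) - G (x t) := sub_nonneg.mpr (hGlow (x t) (y t))
  have hδ'0 : 0 ≤ g (x t) (y (t + 1)) - G (x t) := sub_nonneg.mpr (hGlow (x t) (y (t + 1)))
  have hD0 : (0:ℝ) ≤ ‖x (t + 1) - x t‖ := norm_nonneg _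
  -- ===== upper-level part =====
  have hFdesc : F (x (t + 1)) ≤ F (x t) + ⟪F' (x t), x (t + 1) - x t⟫
      + LF / 2 * ‖x (t + 1) - x t‖ ^ 2 := descent_lemma F F' LF hF hFlip (x t) (x (t + 1))
  have hprox := prox_ineq hγ hρ h hconv (w t) (A t) (hApos t) (x t) (x (t + 1)) (hx t)
  have hQA : ρ * ‖x (t + 1) - x t‖ ^ 2 ≤ ⟪A t (x (t + 1) - x t), x (t + 1) - x t⟫ := hApos t _
  have hQA' : (1 / γ) * (ρ * ‖x (t + 1) - x t‖ ^ 2)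
      ≤ (1 / γ) * ⟪A t (x (t + 1) - x t), x (t + 1) - x t⟫ :=
    mul_le_mul_of_nonneg_left hQA (by positivity)
  have hinner1 : ⟪F' (x t), x (t + 1) - x t⟫ + ⟪w t, x t - x (t + 1)⟫
      ≤ ‖w t - F' (x t)‖ * ‖x (t + 1) - x t‖ := by
    have h1 : ⟪F' (x t), x (t + 1) - x t⟫ + ⟪w t, x t - x (t + 1)⟫
        = ⟪F' (x t) - w t, x (t + 1) - x t⟫ := by
      rw [inner_sub_left, show x t - x (t + 1) = -(x (t + 1) - x t) from by abel,
        inner_neg_right]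
      ring
    rw [h1]
    calc ⟪F' (x t) - w t, x (t + 1) - x t⟫ ≤ ‖F' (x t) - w t‖ * ‖x (t + 1) - x t‖ :=
          real_inner_le_norm _ _
      _ = ‖w t - F' (x t)‖ * ‖x (t + 1) - x t‖ := by rw [norm_sub_rev]
  have P1 : F (x (t + 1)) + h (x (t + 1)) - (F (x t) + h (x t))
      ≤ ‖w t - F' (x t)‖ * ‖x (t + 1) - x t‖ + LF / 2 * ‖x (t + 1) - x t‖ ^ 2
        - ρ / γ * ‖x (t + 1) - x t‖ ^ 2 := by
    have e : ρ / γ * ‖x (t + 1) - x t‖ ^ 2 = (1 / γ) * (ρ * ‖x (t + 1) - x t‖ ^ 2) := by ring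
    rw [e]
    linarith only [hFdesc, hprox, hQA', hinner1]
  -- ===== lower-level x-move part =====
  have hgdescx : g (x (t + 1)) (y (t + 1)) ≤ g (x t) (y (t + 1))
      + ⟪gx (x t) (y (t + 1)), x (t + 1) - x t⟫ + Lg / 2 * ‖x (t + 1) - x t‖ ^ 2 :=
    descent_lemma (fun z => g z (y (t + 1))) (fun z => gx z (y (t + 1))) Lg
      (fun z => hgx z (y (t + 1))) (fun z₁ z₂ => hgxlipx z₁ z₂ (y (t + 1))) (x t) (x (t + 1))
  have hGdesc : -G (x (t + 1)) ≤ -G (x t) + ⟪-(gx (x t) (ystar (x t))), x (t + 1) - x t⟫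
      + LG / 2 * ‖x (t + 1) - x t‖ ^ 2 := by
    refine descent_lemma (fun z => -G z) (fun z => -(gx z (ystar z))) LG
      (fun z => (hGgrad z).neg') (fun z₁ z₂ => ?_) (x t) (x (t + 1))
    rw [show -(gx z₁ (ystar z₁)) - -(gx z₂ (ystar z₂)) = gx z₂ (ystar z₂) - gx z₁ (ystar z₁)
      from by abel, norm_sub_rev]
    exact hGlip z₁ z₂
  have hcross : ⟪gx (x t) (y (t + 1)), x (t + 1) - x t⟫
      + ⟪-(gx (x t) (ystar (x t))), x (t + 1) - x t⟫
      ≤ Lg * ‖y (t + 1) - ystar (x t)‖ * ‖x (t + 1) - x t‖ := by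
    have h1 : ⟪gx (x t) (y (t + 1)), x (t + 1) - x t⟫
        + ⟪-(gx (x t) (ystar (x t))), x (t + 1) - x t⟫
        = ⟪gx (x t) (y (t + 1)) - gx (x t) (ystar (x t)), x (t + 1) - x t⟫ := by
      rw [inner_sub_left, inner_neg_left]
      ring
    rw [h1]
    calc ⟪gx (x t) (y (t + 1)) - gx (x t) (ystar (x t)), x (t + 1) - x t⟫
        ≤ ‖gx (x t) (y (t + 1)) - gx (x t) (ystar (x t))‖ * ‖x (t + 1) - x t‖ :=
          real_inner_le_norm _ _
      _ ≤ (Lg * ‖y (t + 1) - ystar (x t)‖) * ‖x (t + 1) - x t‖ :=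
          mul_le_mul_of_nonneg_right (hgxlipy (x t) (y (t + 1)) (ystar (x t))) hD0
      _ = Lg * ‖y (t + 1) - ystar (x t)‖ * ‖x (t + 1) - x t‖ := by ring
  have P2 : g (x (t + 1)) (y (t + 1)) - G (x (t + 1)) ≤ (g (x t) (y (t + 1)) - G (x t))
      + Lg * ‖y (t + 1) - ystar (x t)‖ * ‖x (t + 1) - x t‖
      + (Lg / 2 + LG / 2) * ‖x (t + 1) - x t‖ ^ 2 := by
    linarith only [hgdescx, hGdesc, hcross]
  -- ===== lower-level y-move part (P3) =====
  have hQl : ρ * ‖y t - y (t + 1)‖ ^ 2 ≤ ⟪B t (y t - y (t + 1)), y t - y (t + 1)⟫ := hBl t _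
  have hQ0 : 0 ≤ ⟪B t (y t - y (t + 1)), y t - y (t + 1)⟫ := le_trans (by positivity) hQl
  have hpsd : ‖B t (y t - y (t + 1))‖ ^ 2 ≤ ρu * ⟪B t (y t - y (t + 1)), y t - y (t + 1)⟫ :=
    psd_norm_sq_le hρ (B t) (hBsymm t) (hBl t) (hBu t) _
  have hBsnorm : ‖B t (y t - y (t + 1))‖ ^ 2 = lam ^ 2 * ‖gy (x t) (y t)‖ ^ 2 := by
    rw [hy t, norm_smul, Real.norm_eq_abs, abs_of_pos hlam, mul_pow]
  have hW : lam ^ 2 * ‖gy (x t) (y t)‖ ^ 2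
      ≤ ρu * ⟪B t (y t - y (t + 1)), y t - y (t + 1)⟫ := hBsnorm ▸ hpsd
  have hPLt : 2 * μ * (g (x t) (y t) - G (x t)) ≤ ‖gy (x t) (y t)‖ ^ 2 := hPL (x t) (y t)
  have hdescy : g (x t) (y (t + 1)) ≤ g (x t) (y t) + ⟪gy (x t) (y t), y (t + 1) - y t⟫
      + Lg / 2 * ‖y (t + 1) - y t‖ ^ 2 :=
    descent_lemma (g (x t)) (gy (x t)) Lg (hgy (x t)) (hgylipy (x t)) (y t) (y (t + 1))
  have hny : ‖y (t + 1) - y t‖ = ‖y t - y (t + 1)‖ := norm_sub_rev _ _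
  rw [hny] at hdescy
  have hinnery : lam * ⟪gy (x t) (y t), y (t + 1) - y t⟫
      = -⟪B t (y t - y (t + 1)), y t - y (t + 1)⟫ := by
    have h1 : ⟪B t (y t - y (t + 1)), y t - y (t + 1)⟫
        = lam * ⟪gy (x t) (y t), y t - y (t + 1)⟫ := by
      rw [hy t, real_inner_smul_left]
    have h2 : ⟪gy (x t) (y t), y (t + 1) - y t⟫ = -⟪gy (x t) (y t), y t - y (t + 1)⟫ := by
      rw [show y (t + 1) - y t = -(y t - y (t + 1)) from by abel, inner_neg_right]
    rw [h2, h1]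
    ring
  have hstep1 : 2 * lam * Lg * ‖y t - y (t + 1)‖ ^ 2
      ≤ ⟪B t (y t - y (t + 1)), y t - y (t + 1)⟫ :=
    le_trans (mul_le_mul_of_nonneg_right h2ll (sq_nonneg _)) hQl
  have hstep2 : lam * (g (x t) (y (t + 1)) - g (x t) (y t))
      ≤ -(3 / 4) * ⟪B t (y t - y (t + 1)), y t - y (t + 1)⟫ := by
    have hd2 := mul_le_mul_of_nonneg_left
      (show g (x t) (y (t + 1)) - g (x t) (y t) ≤ ⟪gy (x t) (y t), y (t + 1) - y t⟫
        + Lg / 2 * ‖y t - y (t + 1)‖ ^ 2 from by linarith [hdescy]) hlam.le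
    linarith only [hd2, hinnery, hstep1, hQ0]
  have hstep3 : 2 * lam ^ 2 * μ * (g (x t) (y t) - G (x t))
      ≤ ρu * ⟪B t (y t - y (t + 1)), y t - y (t + 1)⟫ := by
    have := mul_le_mul_of_nonneg_left hPLt (sq_nonneg lam)
    linarith only [this, hW]
  have t2' : lam * (ρu * (g (x t) (y (t + 1)) - g (x t) (y t)))
      ≤ lam * (-(3 / 2) * (lam * μ * (g (x t) (y t) - G (x t)))) := by
    have t1 := mul_le_mul_of_nonneg_left hstep2 hρu.le
    linarith only [t1, hstep3]
  have t3 : ρu * (g (x t) (y (t + 1)) - g (x t) (y t))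
      ≤ -(3 / 2) * (lam * μ * (g (x t) (y t) - G (x t))) := le_of_mul_le_mul_left t2' hlam
  have P3 : 2 * ρu * (g (x t) (y (t + 1)) - G (x t))
      ≤ 2 * ρu * (g (x t) (y t) - G (x t)) - 3 * lam * μ * (g (x t) (y t) - G (x t)) := by
    linarith only [t3]
  -- ===== quadratic growth and hypergradient-error facts =====
  have P4 : μ * ‖y (t + 1) - ystar (x t)‖ ^ 2 ≤ 2 * (g (x t) (y (t + 1)) - G (x t)) := by
    have := hQG (x t) (y (t + 1))
    linarith only [this]
  have P5 : μ * ‖w t - F' (x t)‖ ^ 2 ≤ 2 * Lhat ^ 2 * (g (x t) (y t) - G (x t)) := by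
    have h1 := hw t
    rw [div_mul_eq_mul_div, le_div_iff₀ hμ] at h1
    linarith only [h1]
  -- ===== Young inequalities =====
  have Y1 : ‖w t - F' (x t)‖ * ‖x (t + 1) - x t‖
      ≤ γ / ρ * ‖w t - F' (x t)‖ ^ 2 + ρ / (4 * γ) * ‖x (t + 1) - x t‖ ^ 2 :=
    young_div hγ hρ
  have Y2 : Lg * ‖y (t + 1) - ystar (x t)‖ * ‖x (t + 1) - x t‖
      ≤ (lam * μ ^ 2 / ρu) / 2 * ‖y (t + 1) - ystar (x t)‖ ^ 2
        + Lg ^ 2 / (2 * (lam * μ ^ 2 / ρu)) * ‖x (t + 1) - x t‖ ^ 2 :=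
    young_two (show (0:ℝ) < lam * μ ^ 2 / ρu by positivity)
  -- ===== coefficient bounds =====
  have G1 : γ / ρ * ‖w t - F' (x t)‖ ^ 2 ≤ lam * μ / (4 * ρu) * (g (x t) (y t) - G (x t)) := by
    refine le_of_mul_le_mul_left ?_ (show (0:ℝ) < 4 * ρ * ρu * μ by positivity)
    have e1 : 4 * ρ * ρu * μ * (γ / ρ * ‖w t - F' (x t)‖ ^ 2)
        = 4 * γ * ρu * (μ * ‖w t - F' (x t)‖ ^ 2) := by
      field_simp
    have e2 : 4 * ρ * ρu * μ * (lam * μ / (4 * ρu) * (g (x t) (y t) - G (x t)))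
        = ρ * lam * μ ^ 2 * (g (x t) (y t) - G (x t)) := by
      field_simp
    rw [e1, e2]
    have h1 := mul_le_mul_of_nonneg_left P5 (show (0:ℝ) ≤ 4 * γ * ρu by positivity)
    have h2 := mul_le_mul_of_nonneg_right hB2 hδ0
    linarith only [h1, h2]
  have G2 : (lam * μ ^ 2 / ρu) / 2 * ‖y (t + 1) - ystar (x t)‖ ^ 2
      ≤ lam * μ / ρu * (g (x t) (y (t + 1)) - G (x t)) := by
    refine le_of_mul_le_mul_left ?_ (show (0:ℝ) < 2 * ρu by positivity)
    have e1 : 2 * ρu * ((lam * μ ^ 2 / ρu) / 2 * ‖y (t + 1) - ystar (x t)‖ ^ 2)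
        = lam * μ * (μ * ‖y (t + 1) - ystar (x t)‖ ^ 2) := by
      field_simp
    have e2 : 2 * ρu * (lam * μ / ρu * (g (x t) (y (t + 1)) - G (x t)))
        = lam * μ * (2 * (g (x t) (y (t + 1)) - G (x t))) := by
      field_simp
    rw [e1, e2]
    exact mul_le_mul_of_nonneg_left P4 (by positivity)
  have G3 : (g (x t) (y (t + 1)) - G (x t)) + lam * μ / ρu * (g (x t) (y (t + 1)) - G (x t))
      - (g (x t) (y t) - G (x t))
      ≤ -(lam * μ / (4 * ρu)) * (g (x t) (y t) - G (x t))
        - lam * μ / (4 * ρu) * (g (x t) (y t) - G (x t)) := by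
    refine le_of_mul_le_mul_left ?_ (show (0:ℝ) < 4 * ρu ^ 2 by positivity)
    have e1 : 4 * ρu ^ 2 * ((g (x t) (y (t + 1)) - G (x t))
        + lam * μ / ρu * (g (x t) (y (t + 1)) - G (x t)) - (g (x t) (y t) - G (x t)))
        = (2 * ρu + 2 * lam * μ) * (2 * ρu * (g (x t) (y (t + 1)) - G (x t)))
          - 4 * ρu ^ 2 * (g (x t) (y t) - G (x t)) := by
      field_simp
      ring
    have e2 : 4 * ρu ^ 2 * (-(lam * μ / (4 * ρu)) * (g (x t) (y t) - G (x t))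
        - lam * μ / (4 * ρu) * (g (x t) (y t) - G (x t)))
        = -(2 * ρu * (lam * μ)) * (g (x t) (y t) - G (x t)) := by
      field_simp
      ring
    rw [e1, e2]
    have hm := mul_le_mul_of_nonneg_left P3 (show (0:ℝ) ≤ 2 * ρu + 2 * lam * μ by positivity)
    nlinarith only [hm, mul_nonneg (mul_nonneg (sq_nonneg lam) (sq_nonneg μ)) hδ0, hδ0, hδ'0]
  -- D^2-coefficient bounds
  have Ca : LF / 2 ≤ 3 / 8 * (ρ / γ) := by
    refine le_of_mul_le_mul_left ?_ (show (0:ℝ) < 8 * γ by positivity)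
    have e1 : 8 * γ * (3 / 8 * (ρ / γ)) = 3 * ρ := by field_simp
    rw [e1]
    linarith only [hB1]
  have Cb : Lg / 2 + LG / 2 ≤ 1 / 32 * (ρ / γ) := by
    refine le_of_mul_le_mul_left ?_ (show (0:ℝ) < 32 * γ by positivity)
    have e1 : 32 * γ * (1 / 32 * (ρ / γ)) = ρ := by field_simp
    rw [e1]
    have h1 := mul_le_mul_of_nonneg_left hLgle (show (0:ℝ) ≤ 16 * γ by positivity)
    have h2 := mul_le_mul_of_nonneg_left hρu1 (show (0:ℝ) ≤ 32 * γ * LG by positivity)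
    have h3 : 32 * γ * LG * ρu ≤ 2 * (lam * μ * ρ) := by linarith only [hB3]
    have h4 := mul_le_mul_of_nonneg_right hlm2 hρ.le
    have h5 := mul_le_mul_of_nonneg_right hρ1.le hρ.le
    nlinarith only [h1, h2, h3, h4, h5]
  have Cc : Lg ^ 2 / (2 * (lam * μ ^ 2 / ρu)) ≤ 1 / 16 * (ρ / γ) := by
    refine le_of_mul_le_mul_left ?_ (show (0:ℝ) < 32 * γ * lam * μ ^ 2 by positivity)
    have e1 : 32 * γ * lam * μ ^ 2 * (Lg ^ 2 / (2 * (lam * μ ^ 2 / ρu)))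
        = 16 * γ * (Lg ^ 2 * ρu) := by
      field_simp
      ring
    have e2 : 32 * γ * lam * μ ^ 2 * (1 / 16 * (ρ / γ)) = 2 * (ρ * lam * μ ^ 2) := by
      field_simp
      ring
    rw [e1, e2]
    -- 16γLg²ρu ≤ 16γ(2μLG)ρu = 2μ(16γLGρu) ≤ 2μ(λμρ) = 2ρλμ²
    have h1 : 16 * γ * (Lg ^ 2 * ρu) ≤ 16 * γ * (2 * μ * LG * ρu) := by
      have h0 := mul_le_mul_of_nonneg_right hLgLG hρu.le
      have h0' := mul_le_mul_of_nonneg_left h0 (show (0:ℝ) ≤ 16 * γ by positivity)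
      linarith only [h0']
    have h2 : 16 * γ * (2 * μ * LG * ρu) = 2 * μ * (γ * (16 * LG * ρu)) := by ring
    have h3 : 2 * μ * (γ * (16 * LG * ρu)) ≤ 2 * μ * (lam * μ * ρ) :=
      mul_le_mul_of_nonneg_left hB3 (by positivity)
    linarith only [h1, h2, h3]
  have hργ : (0:ℝ) ≤ ρ / γ := by positivity
  have Gcoef : LF / 2 + (Lg / 2 + LG / 2) + ρ / (4 * γ) + Lg ^ 2 / (2 * (lam * μ ^ 2 / ρu))
      ≤ ρ / γ - ρ / (4 * γ) := by
    have e1 : ρ / (4 * γ) = 1 / 4 * (ρ / γ) := by ring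
    rw [e1]
    linarith only [Ca, Cb, Cc, hργ]
  have G4 : (LF / 2 + (Lg / 2 + LG / 2) + ρ / (4 * γ) + Lg ^ 2 / (2 * (lam * μ ^ 2 / ρu)))
        * ‖x (t + 1) - x t‖ ^ 2
      ≤ (ρ / γ - ρ / (4 * γ)) * ‖x (t + 1) - x t‖ ^ 2 :=
    mul_le_mul_of_nonneg_right Gcoef (sq_nonneg _)
  -- ===== gradient mapping norm =====
  have hKD : ρ * γ / 4 * ‖γ⁻¹ • (x t - x (t + 1))‖ ^ 2 = ρ / (4 * γ) * ‖x (t + 1) - x t‖ ^ 2 := by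
    rw [norm_smul, Real.norm_eq_abs, abs_of_pos (inv_pos.mpr hγ), norm_sub_rev, mul_pow]
    field_simp
  -- ===== final assembly =====
  have FINAL : (F (x (t + 1)) + h (x (t + 1)) + (g (x (t + 1)) (y (t + 1)) - G (x (t + 1))))
      - (F (x t) + h (x t) + (g (x t) (y t) - G (x t)))
      ≤ -(lam * μ / (4 * ρu)) * (g (x t) (y t) - G (x t))
        - ρ / (4 * γ) * ‖x (t + 1) - x t‖ ^ 2 := by
    linarith only [P1, P2, Y1, Y2, G1, G2, G3, G4]
  linarith only [FINAL, hKD.ge, hKD.le]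
end

section
/- Assume the bilevel setting: g : ℝ^d × ℝ^p → ℝ is differentiable with ∇_x g and ∇_y g each L_g-Lipschitz in each variable; for every x, g(x,·) attains its minimum G(x) at y*(x), satisfies the μ-PL condition ‖∇_y g(x, y)‖² ≥ 2μ (g(x, y) − G(x)) and the quadratic growth condition g(x, y) − G(x) ≥ (μ/2)‖y − y*(x)‖² for all y, with 0 < μ ≤ L_g; G is differentiable with ∇G(x) = ∇_x g(x, y*(x)) and ∇G is L_G-Lipschitz with L_G ≥ max{L_g, L_g²/(2μ)}; F : ℝ^d → ℝ is differentiable with L_F-Lipschitz gradient; h : ℝ^d → ℝ is convex; Φ = F + h is bounded below by Φ* > −∞; and L̂ > 0. Let sequences (x_t, y_t, w_t, A_t, B_t)_{t=1}^{T+1} satisfy: A_t symmetric with A_t ⪰ ρ I_d; B_t symmetric with ρ_l I_p ⪯ B_t ⪯ ρ_u I_p, with ρ_l = ρ ∈ (0,1) and ρ_l ρ_u ≥ 1; x_{t+1} = argmin_{z}{ ⟨w_t, z⟩ + (1/(2γ))(z − x_t)ᵀ A_t (z − x_t) + h(z) }; y_{t+1} = y_t − λ B_t^{-1} ∇_y g(x_t,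 y_t); and ‖w_t − ∇F(x_t)‖² ≤ (2 L̂²/μ)(g(x_t, y_t) − G(x_t)) for all t. Suppose 0 < γ ≤ min{ 3ρ/(4 L_F), ρλμ²/(8 ρ_u L̂²), λμρ_l/(16 L_G ρ_u), μρ_l/(16 L_g² ρ_u) } and 0 < λ ≤ 1/(2 L_g ρ_u). For each t define the gradient mapping 𝒢(x_t, ∇F(x_t), γ) = (x_t − x̄_{t+1})/γ, where x̄_{t+1} = argmin_{z}{ ⟨∇F(x_t), z⟩ + (1/(2γ))(z − x_t)ᵀ A_t (z − x_t) + h(z) }. Then (1/T) Σ_{t=1}^{T} ‖𝒢(x_t, ∇F(x_t), γ)‖² ≤ 8 ( Φ(x_1) − Φ* + g(x_1, y_1) − G(x_1) ) / (T ρ γ). -/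
open scoped RealInnerProductSpace

/-- Small-`s` limit: if `0 ≤ s*L + s^2*M` for all small positive `s`, then `0 ≤ L`. -/
lemma stmt18_pos_of_small (L M : ℝ) (H : ∀ s : ℝ, 0 < s → s ≤ 1 → 0 ≤ s * L + s ^ 2 * M) :
    0 ≤ L := by
  by_contra hL
  push_neg at hL
  set s : ℝ := min 1 (-L / (|M| + 1)) with hs
  have hM1 : (0:ℝ) < |M| + 1 := by positivity
  have hs0 : 0 < s := lt_min one_pos (div_pos (neg_pos.2 hL) hM1)
  have hs1 : s ≤ 1 := min_le_left _ _
  have h2 : s * (|M| + 1) ≤ -L := by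
    have : s ≤ -L / (|M| + 1) := min_le_right _ _
    exact (le_div_iff₀ hM1).mp this
  have h3 := H s hs0 hs1
  nlinarith [le_abs_self M, abs_nonneg M, sq_nonneg s, mul_pos hs0 hs0]

/-- Symmetric `0 ⪯ B ⪯ ρu I` implies `‖Bv‖² ≤ ρu ⟪Bv, v⟫`. -/
lemma stmt18_op_bound {E : Type*} [NormedAddCommGroup E] [InnerProductSpace ℝ E]
    (B : E →L[ℝ] E) (ρ ρu : ℝ) (hρ : 0 ≤ ρ) (hρu : 0 < ρu)
    (hBsymm : ∀ v w', ⟪B v, w'⟫ = ⟪v, B w'⟫)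
    (hBl : ∀ v, ρ * ‖v‖ ^ 2 ≤ ⟪B v, v⟫)
    (hBu : ∀ v, ⟪B v, v⟫ ≤ ρu * ‖v‖ ^ 2) (v : E) :
    ‖B v‖ ^ 2 ≤ ρu * ⟪B v, v⟫ := by
  have h1 : (0:ℝ) ≤ ⟪B (ρu • v - B v), ρu • v - B v⟫ :=
    le_trans (by positivity) (hBl _)
  have hexp : ⟪B (ρu • v - B v), ρu • v - B v⟫
      = ρu ^ 2 * ⟪B v, v⟫ - 2 * ρu * ‖B v‖ ^ 2 + ⟪B (B v), B v⟫ := by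
    have hsym : ⟪B (B v), v⟫ = ‖B v‖ ^ 2 := by
      rw [hBsymm (B v) v, real_inner_self_eq_norm_sq]
    rw [map_sub, map_smul]
    simp only [inner_sub_left, inner_sub_right, real_inner_smul_left, real_inner_smul_right]
    rw [real_inner_self_eq_norm_sq] at *
    ring_nf
    nlinarith [hsym]
  have h2 := hBu (B v)
  nlinarith [h1, hexp, h2]

/-- Descent lemma: `L`-Lipschitz gradient implies quadratic upper bound. -/
lemma stmt18_descent {E : Type*} [NormedAddCommGroup E] [InnerProductSpace ℝ E]
    [CompleteSpace E] (f : E → ℝ) (f' : E → E) (L : ℝ) (hL : 0 ≤ L)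
    (hf : ∀ z, HasGradientAt f (f' z) z)
    (hlip : ∀ a b, ‖f' a - f' b‖ ≤ L * ‖a - b‖) (a b : E) :
    f b ≤ f a + ⟪f' a, b - a⟫ + L / 2 * ‖b - a‖ ^ 2 := by
  set v : E := b - a with hv
  set K : ℝ := ⟪f' a, v⟫ with hK
  set N : ℝ := ‖v‖ ^ 2 with hN
  set c : ℝ → E := fun t => a + t • v with hc
  have hcurve : ∀ t : ℝ, HasDerivAt c v t := by
    intro t
    simpa [hc] using ((hasDerivAt_id t).smul_const v).const_add a
  have hcomp : ∀ t : ℝ, HasDerivAt (fun t => f (c t)) ⟪f' (c t), v⟫ t := by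
    intro t
    have := ((hf (c t)).hasFDerivAt.comp_hasDerivAt t (hcurve t))
    have h2 : HasDerivAt (f ∘ c) ⟪f' (c t), v⟫ t := by simpa using this
    exact h2
  set φ : ℝ → ℝ := fun t => f (c t) - t * K - L / 2 * t ^ 2 * N with hφ
  have hφd : ∀ t : ℝ, HasDerivAt φ (⟪f' (c t), v⟫ - K - L / 2 * (2 * t) * N) t := by
    intro t
    have h1 : HasDerivAt (fun t : ℝ => t * K) K t := by
      simpa using (hasDerivAt_id t).mul_const K
    have h2 : HasDerivAt (fun t : ℝ => L / 2 * t ^ 2 * N) (L / 2 * (2 * t) * N) t := by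
      have h2' := ((hasDerivAt_pow 2 t).const_mul (L / 2)).mul_const N
      have h3 : L / 2 * (2 * t) * N = L / 2 * ((2 : ℕ) * t ^ (2 - 1)) * N := by norm_num
      rw [h3]; exact h2'
    exact ((hcomp t).sub h1).sub h2
  have hmono : AntitoneOn φ (Set.Icc (0:ℝ) 1) := by
    apply antitoneOn_of_deriv_nonpos (convex_Icc 0 1)
    · exact fun t _ => ((hφd t).continuousAt).continuousWithinAt
    · exact fun t _ => ((hφd t).differentiableAt).differentiableWithinAt
    · intro t ht
      rw [interior_Icc] at ht
      rw [(hφd t).deriv]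
      have hts : 0 ≤ t := le_of_lt ht.1
      have hbound : ⟪f' (c t), v⟫ - K ≤ L * t * ‖v‖ * ‖v‖ := by
        have h1 : ⟪f' (c t), v⟫ - K = ⟪f' (c t) - f' a, v⟫ := by
          rw [hK, inner_sub_left]
        rw [h1]
        calc ⟪f' (c t) - f' a, v⟫ ≤ ‖f' (c t) - f' a‖ * ‖v‖ := real_inner_le_norm _ _
          _ ≤ (L * ‖c t - a‖) * ‖v‖ := by
              apply mul_le_mul_of_nonneg_right (hlip _ _) (norm_nonneg _)
          _ = L * t * ‖v‖ * ‖v‖ := by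
              have : c t - a = t • v := by simp [hc]
              rw [this, norm_smul, Real.norm_eq_abs, abs_of_nonneg hts]; ring
      have : L / 2 * (2 * t) * N = L * t * ‖v‖ * ‖v‖ := by rw [hN]; ring
      linarith [hbound, this]
  have h01 := hmono (Set.mem_Icc.mpr ⟨le_refl 0, zero_le_one⟩)
    (Set.mem_Icc.mpr ⟨zero_le_one, le_refl 1⟩) zero_le_one
  have hc0 : c 0 = a := by simp [hc]
  have hc1 : c 1 = b := by simp [hc, hv]
  simp only [hφ, hc0, hc1] at h01
  simp only [one_pow, mul_one, one_mul, zero_mul, sub_zero, ne_eq, OfNat.ofNat_ne_zero,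
    not_false_eq_true, zero_pow, mul_zero] at h01
  linarith [h01]

/-- First-order optimality of the proximal mirror step. -/
lemma stmt18_prox_opt {E : Type*} [NormedAddCommGroup E] [InnerProductSpace ℝ E]
    (γ : ℝ) (hγ : 0 < γ) (A : E →L[ℝ] E)
    (hAsymm : ∀ v w', ⟪A v, w'⟫ = ⟪v, A w'⟫)
    (h : E → ℝ) (hconv : ConvexOn ℝ Set.univ h) (wv x0 xp : E)
    (hmin : ∀ z, ⟪wv, xp⟫ + (1 / (2 * γ)) * ⟪A (xp - x0), xp - x0⟫ + h xp
      ≤ ⟪wv, z⟫ + (1 / (2 * γ)) * ⟪A (z - x0), z - x0⟫ + h z) (z : E) :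
    0 ≤ ⟪wv, z - xp⟫ + (1 / γ) * ⟪A (xp - x0), z - xp⟫ + h z - h xp := by
  set v : E := z - xp with hv
  set cc : E := xp - x0 with hcc
  apply stmt18_pos_of_small _ ((1 / (2 * γ)) * ⟪A v, v⟫)
  intro s hs0 hs1
  have hmin' := hmin (xp + s • v)
  have hq : ⟪A (xp + s • v - x0), xp + s • v - x0⟫
      = ⟪A cc, cc⟫ + 2 * s * ⟪A cc, v⟫ + s ^ 2 * ⟪A v, v⟫ := by
    have : xp + s • v - x0 = cc + s • v := by rw [hcc]; abel
    rw [this, map_add, map_smul]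
    simp only [inner_add_left, inner_add_right, real_inner_smul_left, real_inner_smul_right]
    have hsym : ⟪A v, cc⟫ = ⟪A cc, v⟫ := by rw [hAsymm v cc, real_inner_comm]
    rw [hsym]; ring
  have hlin : ⟪wv, xp + s • v⟫ = ⟪wv, xp⟫ + s * ⟪wv, v⟫ := by
    rw [inner_add_right, real_inner_smul_right]
  have hhs : h (xp + s • v) ≤ (1 - s) * h xp + s * h z := by
    have heq : xp + s • v = (1 - s) • xp + s • z := by
      rw [hv, smul_sub, sub_smul, one_smul]; abel
    rw [heq]
    exact hconv.2 (Set.mem_univ xp) (Set.mem_univ z) (by linarith) (le_of_lt hs0) (by ring)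
  rw [hq, hlin] at hmin'
  have key : 0 ≤ s * ⟪wv, v⟫ + (1 / (2 * γ)) * (2 * s * ⟪A cc, v⟫ + s ^ 2 * ⟪A v, v⟫)
      + (h (xp + s • v) - h xp) := by linarith
  have hfin : 0 ≤ s * ⟪wv, v⟫ + (1 / (2 * γ)) * (2 * s * ⟪A cc, v⟫ + s ^ 2 * ⟪A v, v⟫)
      + s * (h z - h xp) := by nlinarith [hhs]
  have hγ' : (1 / (2 * γ)) * (2 * s * ⟪A cc, v⟫) = s * ((1 / γ) * ⟪A cc, v⟫) := by
    field_simp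
  nlinarith [hfin]

/-- Young's inequality. -/
lemma stmt18_young (c X Y : ℝ) (hc : 0 < c) : X * Y ≤ c / 2 * X ^ 2 + 1 / (2 * c) * Y ^ 2 := by
  have key : X * Y ≤ (c ^ 2 * X ^ 2 + Y ^ 2) / (2 * c) := by
    rw [le_div_iff₀ (by positivity)]
    nlinarith [sq_nonneg (c * X - Y)]
  have : (c ^ 2 * X ^ 2 + Y ^ 2) / (2 * c) = c / 2 * X ^ 2 + 1 / (2 * c) * Y ^ 2 := by
    field_simp
  linarith [key, this.le, this.ge]

set_option maxHeartbeats 2000000 in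
/-- (Theorem 1 of the paper.) Convergence of AdaPAG: under the bilevel
smoothness/PL/quadratic-growth assumptions, the adaptive mirror-descent updates with
`A_t ⪰ ρ I`, `ρ_l I ⪯ B_t ⪯ ρ_u I` (`ρ_l = ρ ∈ (0,1)`, `ρ_l ρ_u ≥ 1`), hypergradient
estimation bound `‖w_t − ∇F(x_t)‖² ≤ (2L̂²/μ)(g(x_t,y_t) − G(x_t))`, step sizes as stated,
and `Φ = F + h` bounded below by `Φ*`, the averaged squared gradient mapping
`𝒢(x_t, ∇F(x_t), γ) = (x_t − x̄_{t+1})/γ` satisfies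
`(1/T) Σ_{t=1}^T ‖𝒢(x_t,∇F(x_t),γ)‖² ≤ 8(Φ(x_1) − Φ* + g(x_1,y_1) − G(x_1))/(Tργ)`. -/
theorem stmt_18 {d p : ℕ} (μ Lg LG LF Lhat ρ ρu γ lam Φstar : ℝ) (T : ℕ) (hT : 0 < T)
    (hμ : 0 < μ) (hμLg : μ ≤ Lg) (hLG : max Lg (Lg ^ 2 / (2 * μ)) ≤ LG)
    (hLhat : 0 < Lhat)
    (hρ : 0 < ρ) (hρ1 : ρ < 1) (hρu : 0 < ρu) (hρρu : 1 ≤ ρ * ρu)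
    (g : EuclideanSpace ℝ (Fin d) → EuclideanSpace ℝ (Fin p) → ℝ)
    (gx : EuclideanSpace ℝ (Fin d) → EuclideanSpace ℝ (Fin p) → EuclideanSpace ℝ (Fin d))
    (gy : EuclideanSpace ℝ (Fin d) → EuclideanSpace ℝ (Fin p) → EuclideanSpace ℝ (Fin p))
    (hgx : ∀ x y, HasGradientAt (fun x' => g x' y) (gx x y) x)
    (hgy : ∀ x y, HasGradientAt (fun y' => g x y') (gy x y) y)
    (hgxlipy : ∀ x y₁ y₂, ‖gx x y₁ - gx x y₂‖ ≤ Lg * ‖y₁ - y₂‖)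
    (hgxlipx : ∀ x₁ x₂ y, ‖gx x₁ y - gx x₂ y‖ ≤ Lg * ‖x₁ - x₂‖)
    (hgylipy : ∀ x y₁ y₂, ‖gy x y₁ - gy x y₂‖ ≤ Lg * ‖y₁ - y₂‖)
    (hgylipx : ∀ x₁ x₂ y, ‖gy x₁ y - gy x₂ y‖ ≤ Lg * ‖x₁ - x₂‖)
    (G : EuclideanSpace ℝ (Fin d) → ℝ)
    (ystar : EuclideanSpace ℝ (Fin d) → EuclideanSpace ℝ (Fin p))
    (hGval : ∀ x, g x (ystar x) = G x) (hGlow : ∀ x y, G x ≤ g x y)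
    (hPL : ∀ x y, ‖gy x y‖ ^ 2 ≥ 2 * μ * (g x y - G x))
    (hQG : ∀ x y, g x y - G x ≥ (μ / 2) * ‖y - ystar x‖ ^ 2)
    (hGgrad : ∀ x, HasGradientAt G (gx x (ystar x)) x)
    (hGlip : ∀ x₁ x₂, ‖gx x₁ (ystar x₁) - gx x₂ (ystar x₂)‖ ≤ LG * ‖x₁ - x₂‖)
    (F : EuclideanSpace ℝ (Fin d) → ℝ)
    (F' : EuclideanSpace ℝ (Fin d) → EuclideanSpace ℝ (Fin d))
    (hF : ∀ z, HasGradientAt F (F' z) z)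
    (hFlip : ∀ z₁ z₂, ‖F' z₁ - F' z₂‖ ≤ LF * ‖z₁ - z₂‖)
    (h : EuclideanSpace ℝ (Fin d) → ℝ) (hconv : ConvexOn ℝ Set.univ h)
    -- `Φ = F + h` is bounded below by `Φ*`:
    (hΦstar : ∀ z, Φstar ≤ F z + h z)
    (x : ℕ → EuclideanSpace ℝ (Fin d)) (y : ℕ → EuclideanSpace ℝ (Fin p))
    (w : ℕ → EuclideanSpace ℝ (Fin d))
    (A : ℕ → (EuclideanSpace ℝ (Fin d) →L[ℝ] EuclideanSpace ℝ (Fin d)))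
    (B : ℕ → (EuclideanSpace ℝ (Fin p) →L[ℝ] EuclideanSpace ℝ (Fin p)))
    (hAsymm : ∀ t v' w', ⟪A t v', w'⟫ = ⟪v', A t w'⟫)
    (hApos : ∀ t v', ρ * ‖v'‖ ^ 2 ≤ ⟪A t v', v'⟫)
    (hBsymm : ∀ t v' w', ⟪B t v', w'⟫ = ⟪v', B t w'⟫)
    (hBl : ∀ t v', ρ * ‖v'‖ ^ 2 ≤ ⟪B t v', v'⟫)
    (hBu : ∀ t v', ⟪B t v', v'⟫ ≤ ρu * ‖v'‖ ^ 2)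
    (hx : ∀ t z, ⟪w t, x (t + 1)⟫
        + (1 / (2 * γ)) * ⟪A t (x (t + 1) - x t), x (t + 1) - x t⟫ + h (x (t + 1))
      ≤ ⟪w t, z⟫ + (1 / (2 * γ)) * ⟪A t (z - x t), z - x t⟫ + h z)
    (hy : ∀ t, B t (y t - y (t + 1)) = lam • gy (x t) (y t))
    (hw : ∀ t, ‖w t - F' (x t)‖ ^ 2 ≤ (2 * Lhat ^ 2 / μ) * (g (x t) (y t) - G (x t)))
    (hγ : 0 < γ) (hγ1 : γ ≤ 3 * ρ / (4 * LF))
    (hγ2 : γ ≤ ρ * lam * μ ^ 2 / (8 * ρu * Lhat ^ 2))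
    (hγ3 : γ ≤ lam * μ * ρ / (16 * LG * ρu))
    (hγ4 : γ ≤ μ * ρ / (16 * Lg ^ 2 * ρu))
    (hlam : 0 < lam) (hlamle : lam ≤ 1 / (2 * Lg * ρu))
    -- `x̄_{t+1}` is the proximal mirror step taken from `x_t` with the exact hypergradient
    -- `∇F(x_t)`, defining the gradient mapping `𝒢(x_t,∇F(x_t),γ) = (x_t − x̄_{t+1})/γ`:
    (xbar : ℕ → EuclideanSpace ℝ (Fin d))
    (hxbar : ∀ t z, ⟪F' (x t), xbar t⟫
        + (1 / (2 * γ)) * ⟪A t (xbar t - x t), xbar t - x t⟫ + h (xbar t)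
      ≤ ⟪F' (x t), z⟫ + (1 / (2 * γ)) * ⟪A t (z - x t), z - x t⟫ + h z) :
    (1 / (T : ℝ)) * ∑ t ∈ Finset.Icc 1 T, ‖γ⁻¹ • (x t - xbar t)‖ ^ 2
      ≤ 8 * (F (x 1) + h (x 1) - Φstar + (g (x 1) (y 1) - G (x 1))) / (T * ρ * γ) := by
  
  -- basic positivity facts
  have hLg : 0 < Lg := lt_of_lt_of_le hμ hμLg
  have hLgLG : Lg ≤ LG := le_trans (le_max_left _ _) hLG
  have hLg2LG : Lg ^ 2 ≤ 2 * μ * LG := by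
    have h1 : Lg ^ 2 / (2 * μ) ≤ LG := le_trans (le_max_right _ _) hLG
    have h2 : 0 < 2 * μ := by linarith
    calc Lg ^ 2 = Lg ^ 2 / (2 * μ) * (2 * μ) := by field_simp
      _ ≤ LG * (2 * μ) := by nlinarith only [h1, h2]
      _ = 2 * μ * LG := by ring
  have hLG0 : 0 < LG := lt_of_lt_of_le hLg hLgLG
  have hρu1 : 1 ≤ ρu := by nlinarith only [hρρu, hρ1, hρu.le]
  have hlampoly : lam * (2 * Lg * ρu) ≤ 1 := by
    have := (le_div_iff₀ (by positivity : (0:ℝ) < 2 * Lg * ρu)).mp hlamle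
    linarith
  have hlamμρu : 2 * lam * μ * ρu ≤ 1 := by nlinarith only [hlampoly, mul_pos hlam hρu, hμLg]
  have hlamLg2 : lam * Lg ≤ ρ / 2 := by nlinarith only [hlampoly, hρρu, hρu]
  have hγ3poly : γ * (16 * LG * ρu) ≤ lam * μ * ρ := by
    have := (le_div_iff₀ (by positivity : (0:ℝ) < 16 * LG * ρu)).mp hγ3
    linarith
  have hγ2poly : γ * (8 * ρu * Lhat ^ 2) ≤ ρ * lam * μ ^ 2 := by
    have := (le_div_iff₀ (by positivity : (0:ℝ) < 8 * ρu * Lhat ^ 2)).mp hγ2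
    linarith
  -- named constants
  set κ : ℝ := lam * μ / ρu with hκdef
  have hκpos : 0 < κ := by rw [hκdef]; positivity
  have hκρu : κ * ρu = lam * μ := by rw [hκdef]; field_simp
  set cY : ℝ := κ * μ / 3 with hcYdef
  have hcYpos : 0 < cY := by rw [hcYdef]; positivity
  set C2 : ℝ := Lg ^ 2 / (2 * cY) with hC2def
  have hC2pos : 0 ≤ C2 := by rw [hC2def]; positivity
  have hC2full : C2 * (2 * lam * μ ^ 2) = 3 * ρu * Lg ^ 2 := by
    rw [hC2def, hcYdef, hκdef]
    field_simp
  -- Lipschitz constant for F, made nonnegative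
  set LF' : ℝ := max LF 0 with hLF'def
  have hLF'0 : 0 ≤ LF' := le_max_right _ _
  have hFlip' : ∀ z₁ z₂, ‖F' z₁ - F' z₂‖ ≤ LF' * ‖z₁ - z₂‖ := fun z₁ z₂ =>
    le_trans (hFlip z₁ z₂) (mul_le_mul_of_nonneg_right (le_max_left _ _) (norm_nonneg _))
  have h4γLF : 4 * γ * LF' ≤ 3 * ρ := by
    rcases le_or_gt LF 0 with hc | hc
    · rw [hLF'def, max_eq_right hc]; nlinarith only [hρ, hγ]
    · rw [hLF'def, max_eq_left hc.le]
      have := (le_div_iff₀ (by positivity : (0:ℝ) < 4 * LF)).mp hγ1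
      linarith
  -- Lipschitz/gradient facts for -G
  have hnegGgrad : ∀ z, HasGradientAt (fun z' => -G z') (-(gx z (ystar z))) z := by
    intro z
    have h1 := ((hGgrad z).hasFDerivAt.neg).hasGradientAt
    have h2 : HasGradientAt (-G) (-(gx z (ystar z))) z := by simpa using h1
    exact h2
  have hnegGlip : ∀ z₁ z₂, ‖-(gx z₁ (ystar z₁)) - -(gx z₂ (ystar z₂))‖ ≤ LG * ‖z₁ - z₂‖ := by
    intro z₁ z₂
    have : -(gx z₁ (ystar z₁)) - -(gx z₂ (ystar z₂)) = -((gx z₁ (ystar z₁)) - (gx z₂ (ystar z₂))) := by abel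
    rw [this, norm_neg]
    exact hGlip z₁ z₂
  -- potential
  set V : ℕ → ℝ := fun t => F (x t) + h (x t) + (g (x t) (y t) - G (x t)) with hVdef
  clear_value κ cY C2 LF'
  -- ================= per-step key inequality =================
  have key : ∀ t : ℕ, ρ * γ / 8 * ‖γ⁻¹ • (x t - xbar t)‖ ^ 2 ≤ V t - V (t + 1) := by
    intro t
    set xt := x t with hxt
    set xs := x (t + 1) with hxs
    set yt := y t with hyt
    set ys := y (t + 1) with hys
    set Δ : EuclideanSpace ℝ (Fin d) := xs - xt with hΔ
    set e : EuclideanSpace ℝ (Fin d) := w t - F' xt with he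
    set bb := xbar t with hbb
    set δt : ℝ := g xt yt - G xt with hδt
    set δs : ℝ := g xs ys - G xs with hδs
    set S : ℝ := g xt ys - G xt with hS0
    set u' : EuclideanSpace ℝ (Fin p) := yt - ys with hu'
    set Q : ℝ := ⟪B t u', u'⟫ with hQ
    set aa : ℝ := ‖ys - ystar xt‖ with haa
    have hδt0 : 0 ≤ δt := sub_nonneg.2 (hGlow xt yt)
    have hδs0 : 0 ≤ δs := sub_nonneg.2 (hGlow xs ys)
    have hSnn : 0 ≤ S := sub_nonneg.2 (hGlow xt ys)
    have hQ0 : 0 ≤ Q := le_trans (by positivity) (hBl t u')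
    have hQl : ρ * ‖u'‖ ^ 2 ≤ Q := hBl t u'
    have hxI : ∀ z, ⟪w t, xs⟫ + 1 / (2 * γ) * ⟪A t (xs - xt), xs - xt⟫ + h xs
        ≤ ⟪w t, z⟫ + 1 / (2 * γ) * ⟪A t (z - xt), z - xt⟫ + h z := hx t
    have hxbarI : ∀ z, ⟪F' xt, bb⟫ + 1 / (2 * γ) * ⟪A t (bb - xt), bb - xt⟫ + h bb
        ≤ ⟪F' xt, z⟫ + 1 / (2 * γ) * ⟪A t (z - xt), z - xt⟫ + h z := hxbar t
    have hyI : B t u' = lam • gy xt yt := hy t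
    have hwI : ‖e‖ ^ 2 ≤ 2 * Lhat ^ 2 / μ * δt := hw t
    have hPLI : 2 * μ * δt ≤ ‖gy xt yt‖ ^ 2 := hPL xt yt
    have hQGI : μ / 2 * aa ^ 2 ≤ S := hQG xt ys
    have hVtI : V t = F xt + h xt + δt := rfl
    have hVsI : V (t + 1) = F xs + h xs + δs := rfl
    clear_value xt xs yt ys Δ e bb δt δs S u' Q aa
    -- hypergradient error bound, polynomial form
    have he2 : μ * ‖e‖ ^ 2 ≤ 2 * Lhat ^ 2 * δt := by
      have h1 := hwI
      rw [div_mul_eq_mul_div, le_div_iff₀ hμ] at h1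
      linarith only [h1]
    -- ===== lower-level descent =====
    have hQdef : Q = lam * ⟪gy xt yt, u'⟫ := by rw [hQ, hyI, real_inner_smul_left]
    have hgyd : g xt ys ≤ g xt yt + ⟪gy xt yt, ys - yt⟫ + Lg / 2 * ‖ys - yt‖ ^ 2 :=
      stmt18_descent (g xt) (gy xt) Lg hLg.le (hgy xt) (fun a b => hgylipy xt a b) yt ys
    have hflip : ys - yt = -u' := by rw [hu', neg_sub]
    rw [hflip, inner_neg_right, norm_neg] at hgyd
    have hLgu : lam * (Lg * ‖u'‖ ^ 2) ≤ Q := by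
      have i1 : lam * Lg * ‖u'‖ ^ 2 ≤ ρ / 2 * ‖u'‖ ^ 2 :=
        mul_le_mul_of_nonneg_right hlamLg2 (sq_nonneg _)
      linarith only [i1, hQl, hQ0]
    have hstep2 : 2 * lam * g xt ys ≤ 2 * lam * g xt yt - Q := by
      have i2 := mul_le_mul_of_nonneg_left hgyd (by positivity : (0:ℝ) ≤ 2 * lam)
      linarith only [i2, hQdef, hLgu]
    have h7 : 2 * lam ^ 2 * μ * δt ≤ ρu * Q := by
      have hBub := stmt18_op_bound (B t) ρ ρu hρ.le hρu (hBsymm t) (hBl t) (hBu t) u'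
      have hBnorm : ‖B t u'‖ ^ 2 = lam ^ 2 * ‖gy xt yt‖ ^ 2 := by
        rw [hyI, norm_smul, Real.norm_eq_abs, mul_pow, sq_abs]
      have j1 : lam ^ 2 * (2 * μ * δt) ≤ lam ^ 2 * ‖gy xt yt‖ ^ 2 :=
        mul_le_mul_of_nonneg_left hPLI (sq_nonneg lam)
      have hQρu : ρu * Q = ρu * ⟪B t u', u'⟫ := by rw [hQ]
      linarith only [j1, hBub, hBnorm, hQρu]
    have hScon : S ≤ (1 - κ) * δt := by
      have i3 := mul_le_mul_of_nonneg_left hstep2 hρu.le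
      have i4 : 2 * lam * ρu * (S - (1 - κ) * δt)
          = ρu * (2 * lam * g xt ys) - ρu * (2 * lam * g xt yt - Q) - ρu * Q
            + 2 * lam * (κ * ρu) * δt := by
        rw [hS0, hδt]; ring
      have i5 : 2 * lam * ρu * (S - (1 - κ) * δt) ≤ 0 := by
        rw [i4, hκρu]; linarith only [i3, h7]
      nlinarith only [i5, mul_pos hlam hρu]
    -- ===== x-shift of the lower-level gap =====
    have hgxd : g xs ys ≤ g xt ys + ⟪gx xt ys, Δ⟫ + Lg / 2 * ‖Δ‖ ^ 2 := by
      have h1 : g xs ys ≤ g xt ys + ⟪gx xt ys, xs - xt⟫ + Lg / 2 * ‖xs - xt‖ ^ 2 :=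
        stmt18_descent (fun x' => g x' ys) (fun x' => gx x' ys) Lg hLg.le
          (fun z => hgx z ys) (fun a b => hgxlipx a b ys) xt xs
      rw [← hΔ] at h1; exact h1
    have hGd : G xt - G xs ≤ -⟪gx xt (ystar xt), Δ⟫ + LG / 2 * ‖Δ‖ ^ 2 := by
      have h1 : -G xs ≤ -G xt + ⟪-(gx xt (ystar xt)), xs - xt⟫ + LG / 2 * ‖xs - xt‖ ^ 2 :=
        stmt18_descent (fun z' => -G z') (fun z' => -(gx z' (ystar z')))
          LG hLG0.le hnegGgrad hnegGlip xt xs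
      rw [← hΔ, inner_neg_left] at h1
      linarith
    have hcross : ⟪gx xt ys, Δ⟫ - ⟪gx xt (ystar xt), Δ⟫ ≤ Lg * aa * ‖Δ‖ := by
      have h1 : ⟪gx xt ys, Δ⟫ - ⟪gx xt (ystar xt), Δ⟫ = ⟪gx xt ys - gx xt (ystar xt), Δ⟫ := by
        rw [inner_sub_left]
      rw [h1]
      calc ⟪gx xt ys - gx xt (ystar xt), Δ⟫ ≤ ‖gx xt ys - gx xt (ystar xt)‖ * ‖Δ‖ :=
            real_inner_le_norm _ _
        _ ≤ Lg * ‖ys - ystar xt‖ * ‖Δ‖ :=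
            mul_le_mul_of_nonneg_right (hgxlipy xt ys (ystar xt)) (norm_nonneg _)
        _ = Lg * aa * ‖Δ‖ := by rw [haa]
    have hyoung : aa * (Lg * ‖Δ‖) ≤ cY / 2 * aa ^ 2 + C2 * ‖Δ‖ ^ 2 := by
      have h1 := stmt18_young cY aa (Lg * ‖Δ‖) hcYpos
      have h2 : 1 / (2 * cY) * (Lg * ‖Δ‖) ^ 2 = C2 * ‖Δ‖ ^ 2 := by
        rw [hC2def, mul_pow]; ring
      linarith
    have hQGp : μ * aa ^ 2 ≤ 2 * S := by linarith only [hQGI]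
    have hεS : cY / 2 * aa ^ 2 ≤ κ / 3 * S := by
      have hcY3 : 3 * cY = κ * μ := by rw [hcYdef]; ring
      have s1 := mul_le_mul_of_nonneg_left hQGp hκpos.le
      have e8 : cY * aa ^ 2 * 3 = κ * (μ * aa ^ 2) := by linear_combination aa ^ 2 * hcY3
      linarith only [s1, e8]
    have hII : δs - δt ≤ -(2 * κ / 3) * δt + (LG + C2) * ‖Δ‖ ^ 2 := by
      have h1 : δs ≤ S + Lg * aa * ‖Δ‖ + (Lg / 2 + LG / 2) * ‖Δ‖ ^ 2 := by
        rw [hδs, hS0]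
        linarith only [hgxd, hGd, hcross]
      have l1 : Lg * ‖Δ‖ ^ 2 ≤ LG * ‖Δ‖ ^ 2 := mul_le_mul_of_nonneg_right hLgLG (sq_nonneg _)
      have h2 : δs ≤ (1 + κ / 3) * S + (LG + C2) * ‖Δ‖ ^ 2 := by
        have e9 : Lg * aa * ‖Δ‖ = aa * (Lg * ‖Δ‖) := by ring
        linarith only [h1, hyoung, hεS, l1, e9]
      have t1 := mul_le_mul_of_nonneg_left hScon (by linarith only [hκpos] : (0:ℝ) ≤ 1 + κ / 3)
      have t2 : (1 + κ / 3) * ((1 - κ) * δt) ≤ (1 - 2 * κ / 3) * δt := by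
        nlinarith only [mul_nonneg (mul_nonneg hκpos.le hκpos.le) hδt0]
      linarith only [h2, t1, t2]
    -- ===== upper-level descent, polynomial form =====
    have hproxw := stmt18_prox_opt γ hγ (A t) (hAsymm t) h hconv (w t) xt xs hxI
    have hproxF := stmt18_prox_opt γ hγ (A t) (hAsymm t) h hconv (F' xt) xt bb hxbarI
    have hc1 : γ * (⟪w t, Δ⟫ + h xs - h xt) ≤ -(ρ * ‖Δ‖ ^ 2) := by
      have h5 := hproxw xt
      have e1 : xt - xs = -Δ := by rw [hΔ, neg_sub]
      rw [← hΔ, e1, inner_neg_right, inner_neg_right] at h5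
      have k1 := mul_le_mul_of_nonneg_left h5 hγ.le
      have hgg : γ * (1 / γ * ⟪A t Δ, Δ⟫) = ⟪A t Δ, Δ⟫ := by field_simp
      linarith only [k1, hgg, hApos t Δ]
    have hFd : F xs ≤ F xt + ⟪F' xt, Δ⟫ + LF' / 2 * ‖Δ‖ ^ 2 := by
      have h1 : F xs ≤ F xt + ⟪F' xt, xs - xt⟫ + LF' / 2 * ‖xs - xt‖ ^ 2 :=
        stmt18_descent F F' LF' hLF'0 hF hFlip' xt xs
      rw [← hΔ] at h1; exact h1
    have hCS : ⟪F' xt, Δ⟫ - ⟪w t, Δ⟫ ≤ ‖e‖ * ‖Δ‖ := by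
      have h1 : ⟪F' xt, Δ⟫ - ⟪w t, Δ⟫ = ⟪-e, Δ⟫ := by
        rw [he, neg_sub, inner_sub_left]
      rw [h1]
      calc ⟪-e, Δ⟫ ≤ ‖-e‖ * ‖Δ‖ := real_inner_le_norm _ _
        _ = ‖e‖ * ‖Δ‖ := by rw [norm_neg]
    have hyoung2 : 8 * γ * ρ * (‖e‖ * ‖Δ‖) ≤ 16 * γ ^ 2 * ‖e‖ ^ 2 + ρ ^ 2 * ‖Δ‖ ^ 2 := by
      nlinarith only [sq_nonneg (4 * γ * ‖e‖ - ρ * ‖Δ‖)]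
    have hI : 8 * γ * ρ * ((F xs + h xs) - (F xt + h xt)) ≤
        16 * γ ^ 2 * ‖e‖ ^ 2 - 4 * ρ ^ 2 * ‖Δ‖ ^ 2 := by
      have j1 := mul_le_mul_of_nonneg_left hc1 (by positivity : (0:ℝ) ≤ 8 * ρ)
      have j2 := mul_le_mul_of_nonneg_left hFd (by positivity : (0:ℝ) ≤ 8 * γ * ρ)
      have j3 := mul_le_mul_of_nonneg_left hCS (by positivity : (0:ℝ) ≤ 8 * γ * ρ)
      have j4' := mul_le_mul_of_nonneg_right h4γLF (sq_nonneg ‖Δ‖)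
      have j4 := mul_le_mul_of_nonneg_left j4' hρ.le
      linarith only [j1, j2, j3, j4, hyoung2]
    -- ===== gradient mapping bound =====
    set vv : EuclideanSpace ℝ (Fin d) := bb - xs with hvv
    clear_value vv
    have hv2 : ρ ^ 2 * ‖vv‖ ^ 2 ≤ γ ^ 2 * ‖e‖ ^ 2 := by
      have h6 := hproxw bb
      have h7b := hproxF xs
      have e2 : xs - bb = -vv := by rw [hvv, neg_sub]
      rw [← hvv, ← hΔ] at h6
      rw [e2, inner_neg_right, inner_neg_right] at h7b
      have hAc0 : ⟪A t Δ, vv⟫ - ⟪A t (bb - xt), vv⟫ = -⟪A t vv, vv⟫ := by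
        rw [← inner_sub_left, ← map_sub]
        have e3 : Δ - (bb - xt) = -vv := by rw [hΔ, hvv]; abel
        rw [e3, map_neg, inner_neg_left]
      have hAc : 1 / γ * ⟪A t Δ, vv⟫ - 1 / γ * ⟪A t (bb - xt), vv⟫
          = -(1 / γ * ⟪A t vv, vv⟫) := by linear_combination (1 / γ) * hAc0
      have hinner : ⟪w t, vv⟫ - ⟪F' xt, vv⟫ = ⟪e, vv⟫ := by rw [he, inner_sub_left]
      have hsum6 : 0 ≤ ⟪e, vv⟫ - 1 / γ * ⟪A t vv, vv⟫ := by linarith only [h6, h7b, hAc, hinner]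
      have k2 := mul_le_mul_of_nonneg_left hsum6 hγ.le
      have hgg2 : γ * (1 / γ * ⟪A t vv, vv⟫) = ⟪A t vv, vv⟫ := by field_simp
      have k3 := mul_le_mul_of_nonneg_left (real_inner_le_norm e vv) hγ.le
      have hve : ρ * ‖vv‖ ^ 2 ≤ γ * (‖e‖ * ‖vv‖) := by linarith only [k2, hgg2, k3, hApos t vv]
      rcases eq_or_lt_of_le (norm_nonneg vv) with hz | hz
      · have e0 : ρ ^ 2 * ‖vv‖ ^ 2 = 0 := by rw [← hz]; ring
        rw [e0]; positivity
      · have h9 : ρ * ‖vv‖ ≤ γ * ‖e‖ := by nlinarith only [hve, hz]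
        nlinarith only [h9, (mul_pos hρ hz).le, mul_nonneg hγ.le (norm_nonneg e)]
    have hGt2 : ρ ^ 2 * (γ ^ 2 * ‖γ⁻¹ • (xt - bb)‖ ^ 2) ≤
        2 * ρ ^ 2 * ‖Δ‖ ^ 2 + 2 * γ ^ 2 * ‖e‖ ^ 2 := by
      have hGtid : γ ^ 2 * ‖γ⁻¹ • (xt - bb)‖ ^ 2 = ‖xt - bb‖ ^ 2 := by
        rw [norm_smul, Real.norm_eq_abs, abs_of_pos (inv_pos.2 hγ), mul_pow]
        field_simp
      rw [hGtid]
      have htr : ‖xt - bb‖ ≤ ‖Δ‖ + ‖vv‖ := by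
        have e4 : xt - bb = -Δ + -vv := by rw [hΔ, hvv]; abel
        rw [e4]
        calc ‖-Δ + -vv‖ ≤ ‖-Δ‖ + ‖-vv‖ := norm_add_le _ _
          _ = ‖Δ‖ + ‖vv‖ := by rw [norm_neg, norm_neg]
      have hsq : ‖xt - bb‖ ^ 2 ≤ (‖Δ‖ + ‖vv‖) ^ 2 := by
        nlinarith only [htr, norm_nonneg (xt - bb)]
      have hsqρ := mul_le_mul_of_nonneg_left hsq (sq_nonneg ρ)
      have q1 : (0:ℝ) ≤ ρ ^ 2 * (‖Δ‖ - ‖vv‖) ^ 2 := by positivity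
      linarith only [hsqρ, hv2, q1]
    -- ===== coefficient conditions =====
    have hbLG : γ * LG ≤ ρ / 32 := by
      have s3 := mul_le_mul_of_nonneg_right hγ3poly (by positivity : (0:ℝ) ≤ 2 * ρu)
      have s5 := mul_le_mul_of_nonneg_right hlamμρu hρ.le
      have s6 : γ * LG ≤ γ * LG * ρu ^ 2 := by
        have q2 : (0:ℝ) ≤ ρu ^ 2 - 1 := by nlinarith only [hρu1, hρu.le]
        have q3 : (0:ℝ) ≤ γ * LG * (ρu ^ 2 - 1) := mul_nonneg (mul_pos hγ hLG0).le q2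
        linarith only [q3]
      linarith only [s3, s5, s6]
    have hbC2 : γ * C2 ≤ 3 * ρ / 16 := by
      have i1 : γ * (3 * ρu * Lg ^ 2) ≤ γ * (3 * ρu * (2 * μ * LG)) := by
        have i1' := mul_le_mul_of_nonneg_left hLg2LG (by positivity : (0:ℝ) ≤ γ * (3 * ρu))
        linarith only [i1']
      have i3 : 3 * μ / 8 * (γ * (16 * LG * ρu)) ≤ 3 * μ / 8 * (lam * μ * ρ) :=
        mul_le_mul_of_nonneg_left hγ3poly (by positivity)
      have i4 : γ * C2 * (2 * lam * μ ^ 2) = γ * (3 * ρu * Lg ^ 2) := by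
        linear_combination γ * hC2full
      have k : γ * C2 * (2 * lam * μ ^ 2) ≤ 3 * ρ / 16 * (2 * lam * μ ^ 2) := by
        linarith only [i1, i3, i4]
      exact le_of_mul_le_mul_right k (by positivity)
    have hcond1 : γ * LG + γ * C2 ≤ ρ / 4 := by linarith [hbLG, hbC2]
    have hEbound : 18 * γ ^ 2 * ‖e‖ ^ 2 ≤ 16 / 3 * γ * ρ * κ * δt := by
      have m1 := mul_le_mul_of_nonneg_left he2 (by positivity : (0:ℝ) ≤ 18 * ρu * γ ^ 2)
      have m2 := mul_le_mul_of_nonneg_left hγ2poly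
        (mul_nonneg (by norm_num : (0:ℝ) ≤ 9/2) (mul_nonneg hγ.le hδt0))
      have e7 : 16 / 3 * γ * ρ * κ * δt * (μ * ρu) = 16 / 3 * γ * ρ * lam * μ ^ 2 * δt := by
        linear_combination 16 / 3 * γ * ρ * δt * μ * hκρu
      have p1 : (0:ℝ) ≤ γ * ρ * lam * μ ^ 2 * δt := by positivity
      have mfin : 18 * γ ^ 2 * ‖e‖ ^ 2 * (μ * ρu) ≤ 16 / 3 * γ * ρ * κ * δt * (μ * ρu) := by
        rw [e7]; linarith only [m1, m2, p1]
      exact le_of_mul_le_mul_right mfin (by positivity)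
    -- ===== final per-step assembly =====
    have hVt : V t = F xt + h xt + δt := hVtI
    have hVs : V (t + 1) = F xs + h xs + δs := hVsI
    have hcc := mul_le_mul_of_nonneg_right hcond1 (sq_nonneg ‖Δ‖)
    have hc : 8 * γ * ρ * ((LG + C2) * ‖Δ‖ ^ 2) ≤ 2 * ρ ^ 2 * ‖Δ‖ ^ 2 := by
      have hcc8 := mul_le_mul_of_nonneg_left hcc (by positivity : (0:ℝ) ≤ 8 * ρ)
      linarith only [hcc8]
    have hII8 := mul_le_mul_of_nonneg_left hII (by positivity : (0:ℝ) ≤ 8 * γ * ρ)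
    have hgoal8 : ρ ^ 2 * (γ ^ 2 * ‖γ⁻¹ • (xt - bb)‖ ^ 2) ≤ 8 * γ * ρ * (V t - V (t + 1)) := by
      rw [hVt, hVs]
      linarith only [hGt2, hI, hII8, hEbound, hc]
    nlinarith only [hgoal8, mul_pos (mul_pos (by norm_num : (0:ℝ) < 8) hγ) hρ]
  -- ================= telescoping =================
  have tel : ∀ n : ℕ, ∑ t ∈ Finset.Icc 1 n, (V t - V (t + 1)) = V 1 - V (n + 1) := by
    intro n
    induction n with
    | zero => simp
    | succ m ih =>
      rw [Finset.sum_Icc_succ_top (Nat.succ_le_succ (Nat.zero_le m)), ih]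
      ring
  have hsum : ρ * γ / 8 * ∑ t ∈ Finset.Icc 1 T, ‖γ⁻¹ • (x t - xbar t)‖ ^ 2 ≤
      V 1 - V (T + 1) := by
    rw [Finset.mul_sum, ← tel T]
    exact Finset.sum_le_sum fun t _ => key t
  have hD : V 1 - V (T + 1) ≤ F (x 1) + h (x 1) - Φstar + (g (x 1) (y 1) - G (x 1)) := by
    have h1 : Φstar ≤ F (x (T + 1)) + h (x (T + 1)) := hΦstar _
    have h2 : 0 ≤ g (x (T + 1)) (y (T + 1)) - G (x (T + 1)) :=
      sub_nonneg.2 (hGlow _ _)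
    rw [hVdef]
    simp only
    linarith
  have hsum2 : ρ * γ / 8 * ∑ t ∈ Finset.Icc 1 T, ‖γ⁻¹ • (x t - xbar t)‖ ^ 2 ≤
      F (x 1) + h (x 1) - Φstar + (g (x 1) (y 1) - G (x 1)) := le_trans hsum hD
  have hTpos : (0:ℝ) < T := by exact_mod_cast hT
  rw [le_div_iff₀ (by positivity : (0:ℝ) < (T:ℝ) * ρ * γ)]
  have hid : 1 / (T:ℝ) * (∑ t ∈ Finset.Icc 1 T, ‖γ⁻¹ • (x t - xbar t)‖ ^ 2) * ((T:ℝ) * ρ * γ)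
      = (∑ t ∈ Finset.Icc 1 T, ‖γ⁻¹ • (x t - xbar t)‖ ^ 2) * (ρ * γ) := by
    field_simp
  rw [hid]
  linarith only [hsum2]
end
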